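/- arXiv:2409.08200 — 6 statements merged into one kernel-verified Lean document; each statement's English description precedes it below -/
import Mathlib

section
/- Every extended Boolean function z on a finite set I admits a factorization z = z₁ · z₂ ⋯ z_r into indecomposable extended Boolean functions, and this factorization is unique: the underlying partition I = I₁ ⊔ ⋯ ⊔ I_r is uniquely determined (and then z_i is the restriction of z to subsets of I_i). -/
open scoped Classical

/-- A preorder on `X`, bundled as a reflexive and transitive relation. -/
structure Preo (X : Type*) where
  le : X → X → Prop
  le_refl : ∀ x, le x x
  le_trans : ∀ {x y z}, le x y → le y z → le x z

namespace Preo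

variable {X : Type*}

/-- The refinement partial order `P ⪯ Q` on preorders: `x ≤_P y` implies `x ≤_Q y`. -/
def Le (P Q : Preo X) : Prop := ∀ ⦃a b⦄, P.le a b → Q.le a b

/-- The opposite preorder. -/
def op (P : Preo X) : Preo X where
  le a b := P.le b a
  le_refl x := P.le_refl x
  le_trans h h' := P.le_trans h' h

/-- The meet (pointwise intersection) of two preorders. -/
def meet (P Q : Preo X) : Preo X where
  le a b := P.le a b ∧ Q.le a b
  le_refl x := ⟨P.le_refl x, Q.le_refl x⟩
  le_trans h h' := ⟨P.le_trans h.1 h'.1, Q.le_trans h.2 h'.2⟩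

/-- The join of two preorders: zigzag chains, i.e. the reflexive-transitive closure
of the union of the two relations. -/
def join (P Q : Preo X) : Preo X where
  le a b := Relation.ReflTransGen (fun u v => P.le u v ∨ Q.le u v) a b
  le_refl _ := Relation.ReflTransGen.refl
  le_trans h h' := Relation.ReflTransGen.trans h h'

/-- The bubble relation: `a` and `b` lie in the same bubble of `P`. -/
def bubRel (P : Preo X) (a b : X) : Prop := P.le a b ∧ P.le b a

/-- `R ◁ P` : `R` is a subdivision of `P`, i.e. `R ⪯ P` and `R = P ∧ (P^op ∨ R)`. -/
def Subdiv (R P : Preo X) : Prop := R.Le P ∧ R = P.meet (P.op.join R)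

/-- `P ◀ Q` : `Q` is a contraction of `P`, i.e. `P ⪯ Q` and `Q = P ∨ (P^op ∧ Q)`. -/
def Contr (P Q : Preo X) : Prop := P.Le Q ∧ Q = P.join (P.op.meet Q)

/-- `K` is a convex subset for the preorder `P`. -/
def ConvexIn (P : Preo X) (K : Set X) : Prop :=
  ∀ ⦃x y z⦄, x ∈ K → y ∈ K → P.le x z → P.le z y → z ∈ K

/-- `K` is connected for (the restriction to `K` of) the preorder `P`:
any two of its elements are joined by a zigzag chain of comparabilities within `K`. -/
def ConnectedIn (P : Preo X) (K : Set X) : Prop :=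
  ∀ ⦃x y⦄, x ∈ K → y ∈ K →
    Relation.ReflTransGen (fun u v => u ∈ K ∧ v ∈ K ∧ (P.le u v ∨ P.le v u)) x y

/-- A total preorder. -/
def Total (P : Preo X) : Prop := ∀ a b, P.le a b ∨ P.le b a

/-- `L` is a linear extension of `P`: `L` is total, `P ⪯ L`, and the bubbles coincide. -/
def IsLinExt (P L : Preo X) : Prop :=
  L.Total ∧ P.Le L ∧ ∀ a b, P.bubRel a b ↔ L.bubRel a b

/-- A finite down-set of the preorder `P`. -/
def IsDownset (P : Preo X) (A : Finset X) : Prop :=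
  ∀ ⦃x y⦄, y ∈ A → P.le x y → x ∈ A

/-- A convex finite subset of the preorder `P`. -/
def ConvexF (P : Preo X) (C : Finset X) : Prop :=
  ∀ ⦃x y z⦄, x ∈ C → y ∈ C → P.le x z → P.le z y → z ∈ C

/-- The down-set generated by a finite set `C`. -/
noncomputable def downClosure [Fintype X] (P : Preo X) (C : Finset X) : Finset X :=
  Finset.univ.filter (fun x => ∃ y ∈ C, P.le x y)

/-- The bubble of an element `a`. -/
noncomputable def bubble [Fintype X] (P : Preo X) (a : X) : Finset X :=
  Finset.univ.filter (fun x => P.le a x ∧ P.le x a)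

/-- The set of bubbles of `P`. -/
noncomputable def bubbles [Fintype X] (P : Preo X) : Finset (Finset X) :=
  Finset.univ.image (fun a => P.bubble a)

/-- `R` is a positive sub-preorder of `P`: in any loop
`x = x₀ ≤_R x₁ ≥_P x₂ ≤_R ⋯ ≤_R x_{2k-1} ≥_P x_{2k} = x`,
every descending step `≥_P` is actually `≥_R`. -/
def PositiveSub (R P : Preo X) : Prop :=
  ∀ (k : ℕ) (x : ℕ → X), x (2 * k) = x 0 →
    (∀ i < k, R.le (x (2 * i)) (x (2 * i + 1))) →
    (∀ i < k, P.le (x (2 * i + 2)) (x (2 * i + 1))) →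
    ∀ i < k, R.le (x (2 * i + 2)) (x (2 * i + 1))

end Preo

section Submod

variable {I : Type*} [Fintype I] [DecidableEq I]

/-- A function `z : P(I) → ℝ ∪ {∞}` is submodular if
`z(S ∪ T) + z(S ∩ T) ≤ z(S) + z(T)` for all `S, T`. -/
def Submodular (z : Finset I → WithTop ℝ) : Prop :=
  ∀ S T : Finset I, z (S ∪ T) + z (S ∩ T) ≤ z S + z T

/-- The corestriction `z_{/A}` : `U ↦ z(A ∪ U) − z(A)` (meaningful when `z A ≠ ⊤`). -/
noncomputable def coRes (z : Finset I → WithTop ℝ) (A U : Finset I) : WithTop ℝ :=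
  z (A ∪ U) + ((-(z A).untopD 0 : ℝ) : WithTop ℝ)

/-- The extended generalized permutahedron of `z`:
`x_I = z(I)` and `x_A ≤ z(A)` whenever `z(A) < ∞`. -/
def EGP (z : Finset I → WithTop ℝ) : Set (I → ℝ) :=
  {x | ((∑ i, x i : ℝ) : WithTop ℝ) = z Finset.univ ∧
       ∀ A : Finset I, ((∑ i ∈ A, x i : ℝ) : WithTop ℝ) ≤ z A}

/-- `z` restricted to subsets of `C` decomposes as the product of its restrictions to `S`
and `T`, where `C = S ⊔ T`. -/
def SplitsAlong (z : Finset I → WithTop ℝ) (C S T : Finset I) : Prop :=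
  Disjoint S T ∧ S ∪ T = C ∧ ∀ E ⊆ C, z E = z (E ∩ S) + z (E ∩ T)

/-- `z` restricted to subsets of `C` is indecomposable. -/
def IndecompOn (z : Finset I → WithTop ℝ) (C : Finset I) : Prop :=
  ∀ S T : Finset I, S.Nonempty → T.Nonempty → ¬ SplitsAlong z C S T

/-- `fam` is the partition underlying a factorization of `z` into indecomposable
extended Boolean functions. -/
def IsIndecompFactorization (z : Finset I → WithTop ℝ) (fam : Finset (Finset I)) : Prop :=
  (∀ B ∈ fam, B.Nonempty) ∧
  (∀ B ∈ fam, ∀ B' ∈ fam, B ≠ B' → Disjoint B B') ∧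
  fam.sup id = Finset.univ ∧
  (∀ E : Finset I, z E = ∑ B ∈ fam, z (E ∩ B)) ∧
  ∀ B ∈ fam, IndecompOn z B

/-- A family of finite subsets of `I` forming a topology on `I`. -/
def IsTopologyFam (F : Set (Finset I)) : Prop :=
  ∅ ∈ F ∧ Finset.univ ∈ F ∧ (∀ A ∈ F, ∀ B ∈ F, A ∪ B ∈ F) ∧ ∀ A ∈ F, ∀ B ∈ F, A ∩ B ∈ F

/-- The preorder `P` is compatible with the submodular function `z`. -/
def Compatible (z : Finset I → WithTop ℝ) (P : Preo I) : Prop :=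
  (∀ A : Finset I, P.IsDownset A → z A ≠ ⊤) ∧
  ∀ A B : Finset I, P.IsDownset A → P.IsDownset B → A ⊆ B →
    ∀ C₁ C₂ : Finset I, Disjoint C₁ C₂ → C₁ ∪ C₂ = B \ A →
      (∀ x ∈ C₁, ∀ y ∈ C₂, ¬ P.le x y ∧ ¬ P.le y x) →
      ∀ U ⊆ B \ A, coRes z A U = coRes z A (U ∩ C₁) + coRes z A (U ∩ C₂)

/-- For a convex subset `C` of `P`, the function `z_C : U ↦ z(A ∪ U) − z(A)`, where
`A = (↓C) \ C` with `↓C` the down-set generated by `C`. -/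
noncomputable def zConv (z : Finset I → WithTop ℝ) (P : Preo I) (C U : Finset I) :
    WithTop ℝ :=
  coRes z (P.downClosure C \ C) U

/-- The preorder `P` conforms to the submodular function `z`: it is compatible with `z`
and every product decomposition of `z_C`, for `C` convex in `P`, comes from a
disconnected decomposition of the preorder induced on `C`. -/
def Conforms (z : Finset I → WithTop ℝ) (P : Preo I) : Prop :=
  Compatible z P ∧
  ∀ C : Finset I, P.ConvexF C →
    ∀ C₁ C₂ : Finset I, Disjoint C₁ C₂ → C₁ ∪ C₂ = C →
      (∀ U ⊆ C, zConv z P C U = zConv z P C (U ∩ C₁) + zConv z P C (U ∩ C₂)) →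
      ∀ x ∈ C₁, ∀ y ∈ C₂, ¬ P.le x y ∧ ¬ P.le y x

/-- The preorder `pre(z)` associated to `z`: `x ≤ y` iff every `A` with `z(A) < ∞`
("open set") containing `y` contains `x`. -/
def preZ (z : Finset I → WithTop ℝ) : Preo I where
  le x y := ∀ A : Finset I, z A ≠ ⊤ → y ∈ A → x ∈ A
  le_refl _ := fun _ _ h => h
  le_trans h h' := fun A hA hy => h A hA (h' A hA hy)

/-- The preorder associated (by the Alexandroff correspondence) to a family of subsets. -/
def preOfFam (F : Set (Finset I)) : Preo I where
  le x y := ∀ A ∈ F, y ∈ A → x ∈ A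
  le_refl _ := fun _ _ h => h
  le_trans h h' := fun A hA hy => h A hA (h' A hA hy)

/-- `Alin(P, z)`: the affine space cut out by `x_A = z(A)` for `A` a down-set of `P`. -/
def Alin (z : Finset I → WithTop ℝ) (P : Preo I) : Set (I → ℝ) :=
  {x | ∀ A : Finset I, P.IsDownset A → ((∑ i ∈ A, x i : ℝ) : WithTop ℝ) = z A}

/-- `AlinBu(P, z)`: the affine space cut out by `x_C = z_C(C)` for `C` a bubble of `P`. -/
def AlinBu (z : Finset I → WithTop ℝ) (P : Preo I) : Set (I → ℝ) :=
  {x | ∀ a : I, ((∑ i ∈ P.bubble a, x i : ℝ) : WithTop ℝ) = zConv z P (P.bubble a) (P.bubble a)}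

/-- `Φ_z(P)`: the (possibly empty) face of `Π(z)` cut out by the equalities `x_A = z(A)`
for `A` a down-set of `P`. -/
def Phi (z : Finset I → WithTop ℝ) (P : Preo I) : Set (I → ℝ) :=
  {x | x ∈ EGP z ∧ ∀ A : Finset I, P.IsDownset A → ((∑ i ∈ A, x i : ℝ) : WithTop ℝ) = z A}

/-- `Ψ_z(G)`: the family of sets `A` with `z(A) < ∞` on which `x_A = z(A)` for all `x ∈ G`. -/
def PsiFam (z : Finset I → WithTop ℝ) (G : Set (I → ℝ)) : Set (Finset I) :=
  {A | z A ≠ ⊤ ∧ ∀ x ∈ G, ((∑ i ∈ A, x i : ℝ) : WithTop ℝ) = z A}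

/-- `Ψ_z(G)` as a preorder. -/
def PsiPre (z : Finset I → WithTop ℝ) (G : Set (I → ℝ)) : Preo I :=
  preOfFam (PsiFam z G)

/-- `z_P = ∏_{C ∈ b(P)} z_C`: the product over all bubbles of `P`. -/
noncomputable def zP (z : Finset I → WithTop ℝ) (P : Preo I) : Finset I → WithTop ℝ :=
  fun E => ∑ C ∈ P.bubbles, zConv z P C (E ∩ C)

/-- The restriction `z|_S` of `z` to subsets of `S`. -/
def restrictFn (z : Finset I → WithTop ℝ) (S : Finset I) :
    Finset {x : I // x ∈ S} → WithTop ℝ :=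
  fun U => z (U.map (Function.Embedding.subtype fun x => x ∈ S))

/-- The corestriction `z_{/S}` of `z`, on subsets of `I ∖ S`. -/
noncomputable def coresFn (z : Finset I → WithTop ℝ) (S : Finset I) :
    Finset {x : I // x ∉ S} → WithTop ℝ :=
  fun U => z (S ∪ U.map (Function.Embedding.subtype fun x => x ∉ S)) +
    ((-(z S).untopD 0 : ℝ) : WithTop ℝ)

/-- The restriction `P|_S` of a preorder to `S`. -/
def restrictPre (P : Preo I) (S : Finset I) : Preo {x : I // x ∈ S} where
  le a b := P.le a b
  le_refl a := P.le_refl a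
  le_trans h h' := P.le_trans h h'

/-- The corestriction `P_{/S}` of a preorder, on `I ∖ S`. -/
def coresPre (P : Preo I) (S : Finset I) : Preo {x : I // x ∉ S} where
  le a b := P.le a b
  le_refl a := P.le_refl a
  le_trans h h' := P.le_trans h h'

end Submod

set_option linter.unusedSectionVars false

section AuxFactor

variable {I : Type*} [Fintype I] [DecidableEq I]

/-- `S` is a split of `z`: `z` decomposes additively along `S` and its complement. -/
def IsSplit (z : Finset I → WithTop ℝ) (S : Finset I) : Prop :=
  ∀ E : Finset I, z E = z (E ∩ S) + z (E \ S)

variable {z : Finset I → WithTop ℝ}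

lemma isSplit_univ (hz0 : z ∅ = 0) : IsSplit z Finset.univ := by
  intro E; have h : E \ Finset.univ = ∅ := by ext x; simp
  rw [Finset.inter_univ, h, hz0, add_zero]

lemma isSplit_compl {S : Finset I} (hS : IsSplit z S) : IsSplit z (Finset.univ \ S) := by
  intro E
  have h1 : E ∩ (Finset.univ \ S) = E \ S := by ext x; simp
  have h2 : E \ (Finset.univ \ S) = E ∩ S := by ext x; simp
  rw [h1, h2, add_comm]
  exact hS E

lemma isSplit_inter {S T : Finset I} (hS : IsSplit z S) (hT : IsSplit z T) :
    IsSplit z (S ∩ T) := by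
  intro E
  have e1 : (E \ (S ∩ T)) ∩ S = (E ∩ S) \ T := by ext x; simp; tauto
  have e2 : (E \ (S ∩ T)) \ S = E \ S := by ext x; simp; tauto
  have e3 : (E ∩ S) ∩ T = E ∩ (S ∩ T) := by rw [Finset.inter_assoc]
  calc z E = z (E ∩ S) + z (E \ S) := hS E
    _ = (z (E ∩ (S ∩ T)) + z ((E ∩ S) \ T)) + z (E \ S) := by rw [hT (E ∩ S), e3]
    _ = z (E ∩ (S ∩ T)) + (z ((E \ (S ∩ T)) ∩ S) + z ((E \ (S ∩ T)) \ S)) := by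
        rw [e1, e2, add_assoc]
    _ = z (E ∩ (S ∩ T)) + z (E \ (S ∩ T)) := by rw [← hS (E \ (S ∩ T))]

/-- The atom of `x`: all elements agreeing with `x` on every split. -/
noncomputable def atomOf (z : Finset I → WithTop ℝ) (x : I) : Finset I :=
  Finset.univ.filter (fun y => ∀ S : Finset I, IsSplit z S → (x ∈ S ↔ y ∈ S))

lemma mem_atomOf {x y : I} :
    y ∈ atomOf z x ↔ ∀ S : Finset I, IsSplit z S → (x ∈ S ↔ y ∈ S) := by
  simp [atomOf]

lemma self_mem_atomOf (x : I) : x ∈ atomOf z x := by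
  simp [mem_atomOf]

lemma atomOf_eq_of_mem {x y : I} (h : y ∈ atomOf z x) : atomOf z y = atomOf z x := by
  rw [mem_atomOf] at h
  ext w
  rw [mem_atomOf, mem_atomOf]
  constructor <;> intro hw S hS
  · rw [h S hS]; exact hw S hS
  · rw [← h S hS]; exact hw S hS

lemma mem_inf_id {F : Finset (Finset I)} {y : I} :
    y ∈ F.inf id ↔ ∀ S ∈ F, y ∈ S := by
  induction F using Finset.induction_on with
  | empty => simp [Finset.top_eq_univ]
  | @insert a F ha ih => simp [Finset.inf_insert, Finset.inf_eq_inter, ih]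

lemma isSplit_inf (hz0 : z ∅ = 0) {F : Finset (Finset I)}
    (hF : ∀ S ∈ F, IsSplit z S) : IsSplit z (F.inf id) := by
  induction F using Finset.induction_on with
  | empty => simpa [Finset.top_eq_univ] using isSplit_univ hz0
  | @insert a F ha ih =>
    rw [Finset.inf_insert, Finset.inf_eq_inter]
    exact isSplit_inter (hF a (Finset.mem_insert_self _ _))
      (ih fun S hS => hF S (Finset.mem_insert_of_mem hS))

lemma atomOf_eq_inf (x : I) :
    atomOf z x
      = ((Finset.univ : Finset (Finset I)).filter (fun S => IsSplit z S ∧ x ∈ S)).inf id := by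
  ext y
  rw [mem_atomOf, mem_inf_id]
  simp only [Finset.mem_filter, Finset.mem_univ, true_and]
  constructor
  · rintro h S ⟨hS, hx⟩; exact (h S hS).1 hx
  · intro h S hS
    constructor
    · intro hx; exact h S ⟨hS, hx⟩
    · intro hy; by_contra hx
      have := h (Finset.univ \ S) ⟨isSplit_compl hS, by simp [hx]⟩
      simp at this; exact this hy

lemma isSplit_atomOf (hz0 : z ∅ = 0) (x : I) : IsSplit z (atomOf z x) := by
  rw [atomOf_eq_inf]
  exact isSplit_inf hz0 fun S hS => ((Finset.mem_filter.mp hS).2).1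

lemma sum_over_splits (hz0 : z ∅ = 0) :
    ∀ F : Finset (Finset I), (∀ B ∈ F, IsSplit z B) →
    (∀ B ∈ F, ∀ B' ∈ F, B ≠ B' → Disjoint B B') →
    ∀ E : Finset I, z (E ∩ F.sup id) = ∑ B ∈ F, z (E ∩ B) := by
  intro F
  induction F using Finset.induction_on with
  | empty => intro _ _ E; simp [hz0]
  | @insert B F hB ih =>
    intro hs hd E
    have hsp : IsSplit z B := hs B (Finset.mem_insert_self _ _)
    have hdisj : Disjoint B (F.sup id) := by
      rw [Finset.disjoint_sup_right]
      intro B' hB'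
      exact hd B (Finset.mem_insert_self _ _) B' (Finset.mem_insert_of_mem hB')
        (fun h => hB (h ▸ hB'))
    have hd' := Finset.disjoint_left.mp hdisj
    have e1 : (E ∩ (insert B F).sup id) ∩ B = E ∩ B := by
      rw [Finset.sup_insert]; ext x
      simp only [Finset.mem_inter, Finset.mem_union, Finset.sup_eq_union, id_eq]
      tauto
    have e2 : (E ∩ (insert B F).sup id) \ B = E ∩ F.sup id := by
      rw [Finset.sup_insert]; ext x
      simp only [Finset.mem_sdiff, Finset.mem_inter, Finset.mem_union, Finset.sup_eq_union,
        id_eq]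
      constructor
      · rintro ⟨⟨hxE, hx⟩, hxB⟩
        exact ⟨hxE, hx.resolve_left hxB⟩
      · rintro ⟨hxE, hx⟩
        exact ⟨⟨hxE, Or.inr hx⟩, fun hxB => hd' hxB hx⟩
    rw [hsp (E ∩ (insert B F).sup id), e1, e2,
      ih (fun B' h => hs B' (Finset.mem_insert_of_mem h))
        (fun B' h B'' h' => hd B' (Finset.mem_insert_of_mem h) B'' (Finset.mem_insert_of_mem h')),
      Finset.sum_insert hB]

lemma isIndecompFactorization_atoms (hz0 : z ∅ = 0) :
    IsIndecompFactorization z (Finset.univ.image (atomOf z)) := by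
  have hmem : ∀ B ∈ Finset.univ.image (atomOf z), ∃ x, B = atomOf z x := by
    intro B hB
    obtain ⟨x, -, hx⟩ := Finset.mem_image.mp hB
    exact ⟨x, hx.symm⟩
  have hdisj : ∀ B ∈ Finset.univ.image (atomOf z), ∀ B' ∈ Finset.univ.image (atomOf z),
      B ≠ B' → Disjoint B B' := by
    intro B hB B' hB' hne
    obtain ⟨x, rfl⟩ := hmem B hB
    obtain ⟨y, rfl⟩ := hmem B' hB'
    by_contra hnd
    obtain ⟨w, hw, hw'⟩ := Finset.not_disjoint_iff.mp hnd
    exact hne ((atomOf_eq_of_mem hw).symm.trans (atomOf_eq_of_mem hw'))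
  have hsup : (Finset.univ.image (atomOf z)).sup id = Finset.univ := by
    apply Finset.eq_univ_of_forall
    intro x
    exact Finset.mem_sup.mpr ⟨atomOf z x, Finset.mem_image_of_mem _ (Finset.mem_univ x),
      self_mem_atomOf x⟩
  have hsplits : ∀ B ∈ Finset.univ.image (atomOf z), IsSplit z B := by
    intro B hB
    obtain ⟨x, rfl⟩ := hmem B hB
    exact isSplit_atomOf hz0 x
  refine ⟨?_, hdisj, hsup, ?_, ?_⟩
  · intro B hB
    obtain ⟨x, rfl⟩ := hmem B hB
    exact ⟨x, self_mem_atomOf x⟩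
  · intro E
    have := sum_over_splits hz0 _ hsplits hdisj E
    rwa [hsup, Finset.inter_univ] at this
  · intro B hB S T hS hT ⟨hdST, hun, hE⟩
    obtain ⟨x, rfl⟩ := hmem B hB
    have hA : IsSplit z (atomOf z x) := isSplit_atomOf hz0 x
    have hSsub : S ⊆ atomOf z x := hun ▸ Finset.subset_union_left
    have hTsub : T ⊆ atomOf z x := hun ▸ Finset.subset_union_right
    have hSplitS : IsSplit z S := by
      intro E
      have e1 : (E ∩ atomOf z x) ∩ S = E ∩ S := by
        ext w; simp only [Finset.mem_inter]
        exact ⟨fun ⟨⟨h1, _⟩, h2⟩ => ⟨h1, h2⟩, fun ⟨h1, h2⟩ => ⟨⟨h1, hSsub h2⟩, h2⟩⟩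
      have e2 : (E ∩ atomOf z x) ∩ T = E ∩ T := by
        ext w; simp only [Finset.mem_inter]
        exact ⟨fun ⟨⟨h1, _⟩, h2⟩ => ⟨h1, h2⟩, fun ⟨h1, h2⟩ => ⟨⟨h1, hTsub h2⟩, h2⟩⟩
      have e3 : (E \ S) ∩ atomOf z x = E ∩ T := by
        ext w
        simp only [Finset.mem_inter, Finset.mem_sdiff]
        constructor
        · rintro ⟨⟨hwE, hwS⟩, hwA⟩
          rw [← hun] at hwA
          exact ⟨hwE, (Finset.mem_union.mp hwA).resolve_left hwS⟩
        · rintro ⟨hwE, hwT⟩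
          exact ⟨⟨hwE, fun hwS => Finset.disjoint_left.mp hdST hwS hwT⟩, hTsub hwT⟩
      have e4 : (E \ S) \ atomOf z x = E \ atomOf z x := by
        ext w
        simp only [Finset.mem_sdiff]
        exact ⟨fun ⟨⟨h1, _⟩, h3⟩ => ⟨h1, h3⟩, fun ⟨h1, h3⟩ => ⟨⟨h1, fun h => h3 (hSsub h)⟩, h3⟩⟩
      calc z E = z (E ∩ atomOf z x) + z (E \ atomOf z x) := hA E
        _ = (z (E ∩ S) + z (E ∩ T)) + z (E \ atomOf z x) := by
            rw [hE (E ∩ atomOf z x) Finset.inter_subset_right, e1, e2]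
        _ = z (E ∩ S) + (z ((E \ S) ∩ atomOf z x) + z ((E \ S) \ atomOf z x)) := by
            rw [e3, e4, add_assoc]
        _ = z (E ∩ S) + z (E \ S) := by rw [← hA (E \ S)]
    obtain ⟨s, hs⟩ := hS
    obtain ⟨t, ht⟩ := hT
    have hxs := mem_atomOf.mp (hSsub hs) S hSplitS
    have hxt := mem_atomOf.mp (hTsub ht) S hSplitS
    exact Finset.disjoint_left.mp hdST (hxt.mp (hxs.mpr hs)) ht

lemma factorization_unique (hz0 : z ∅ = 0) {fam : Finset (Finset I)}
    (h : IsIndecompFactorization z fam) :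
    fam = Finset.univ.image (atomOf z) := by
  obtain ⟨h1, h2, h3, h4, h5⟩ := h
  -- every member of fam is a split
  have hsp : ∀ B ∈ fam, IsSplit z B := by
    intro B hB E
    rw [h4 E, h4 (E \ B)]
    rw [← Finset.add_sum_erase _ _ hB, ← Finset.add_sum_erase _ (fun B' => z ((E \ B) ∩ B')) hB]
    rw [Finset.sdiff_inter_self, hz0, zero_add]
    congr 1
    refine Finset.sum_congr rfl fun B' hB' => ?_
    have hne : B ≠ B' := fun h => (Finset.mem_erase.mp hB').1 h.symm
    have hd := Finset.disjoint_left.mp (h2 B hB B' (Finset.mem_erase.mp hB').2 hne)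
    congr 1
    ext w
    simp only [Finset.mem_inter, Finset.mem_sdiff]
    have := @hd w
    tauto
  -- every member of fam is entirely inside or outside any split
  have hio : ∀ B ∈ fam, ∀ S : Finset I, IsSplit z S → B ⊆ S ∨ ∀ y ∈ B, y ∉ S := by
    intro B hB S hS
    by_contra hcon
    push_neg at hcon
    obtain ⟨hnsub, t, ht, htS⟩ := hcon
    obtain ⟨s, hsB, hsS⟩ := Finset.not_subset.mp hnsub
    refine h5 B hB (B ∩ S) (B \ S) ⟨t, Finset.mem_inter.mpr ⟨ht, htS⟩⟩
      ⟨s, Finset.mem_sdiff.mpr ⟨hsB, hsS⟩⟩ ⟨(Finset.disjoint_sdiff_inter B S).symm,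
        by rw [Finset.union_comm, Finset.sdiff_union_inter], ?_⟩
    · intro E hE
      have hE' : ∀ w, w ∈ E → w ∈ B := fun w hw => hE hw
      have e1 : E ∩ (B ∩ S) = E ∩ S := by
        ext w; simp only [Finset.mem_inter]
        have := hE' w; tauto
      have e2 : E ∩ (B \ S) = E \ S := by
        ext w; simp only [Finset.mem_inter, Finset.mem_sdiff]
        have := hE' w; tauto
      rw [e1, e2]
      exact hS E
  -- hence every member of fam is an atom
  have hatom : ∀ B ∈ fam, ∀ x ∈ B, B = atomOf z x := by
    intro B hB x hx
    ext y
    constructor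
    · intro hy
      rw [mem_atomOf]
      intro S hS
      rcases hio B hB S hS with hsub | hout
      · exact ⟨fun _ => hsub hy, fun _ => hsub hx⟩
      · exact ⟨fun h => absurd h (hout x hx), fun h => absurd h (hout y hy)⟩
    · intro hy
      exact (mem_atomOf.mp hy B (hsp B hB)).mp hx
  ext B
  constructor
  · intro hB
    obtain ⟨x, hx⟩ := h1 B hB
    exact Finset.mem_image.mpr ⟨x, Finset.mem_univ x, (hatom B hB x hx).symm⟩
  · intro hB
    obtain ⟨a, -, rfl⟩ := Finset.mem_image.mp hB
    have ha : a ∈ fam.sup id := h3 ▸ Finset.mem_univ a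
    obtain ⟨B', hB', haB'⟩ := Finset.mem_sup.mp ha
    have : B' = atomOf z a := hatom B' hB' a haB'
    rwa [← this]

end AuxFactor

/-- Every extended Boolean function `z` on a finite set `I` admits a unique
factorization into indecomposable extended Boolean functions; i.e. there is a unique
partition of `I` underlying such a factorization (the factors being the restrictions of
`z` to the parts). -/
theorem unique_indecomposable_factorization
    {I : Type*} [Fintype I] [DecidableEq I]
    (z : Finset I → WithTop ℝ) (hz0 : z ∅ = 0) (hzI : z Finset.univ ≠ ⊤) :
    ∃! fam : Finset (Finset I), IsIndecompFactorization z fam := by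
  exact ⟨Finset.univ.image (atomOf z), isIndecompFactorization_atoms hz0,
    fun fam' h => factorization_unique hz0 h⟩
end

section
/- Let z be a submodular function on a finite set I, let S ⊆ T ⊆ I with z(S) < ∞ and z(T) < ∞, let C = T ∖ S, and let C = C₁ ∪ C₂ be a disjoint union. Then the function z' = z_{T/S} decomposes as the product z'|_{C₁} · z'|_{C₂} if and only if z(T) + z(S) = z(S ∪ C₁) + z(S ∪ C₂). -/
open scoped Classical

private lemma withtop_aux {a b c : WithTop ℝ} {s : ℝ} :
    a + ((-s : ℝ) : WithTop ℝ) = (b + ((-s : ℝ) : WithTop ℝ)) + (c + ((-s : ℝ) : WithTop ℝ)) ↔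
      a + (s : WithTop ℝ) = b + c := by
  induction a using WithTop.recTopCoe with
  | top =>
    induction b using WithTop.recTopCoe with
    | top => simp [WithTop.top_add]
    | coe b =>
      induction c using WithTop.recTopCoe with
      | top => simp [WithTop.top_add, WithTop.add_top]
      | coe c =>
        simp only [WithTop.top_add, ← WithTop.coe_add]
        constructor <;> intro h <;> exact absurd h.symm (WithTop.coe_ne_top)
  | coe a =>
    induction b using WithTop.recTopCoe with
    | top =>
      simp only [WithTop.top_add, ← WithTop.coe_add]
      constructor <;> intro h <;> exact absurd h WithTop.coe_ne_top
    | coe b =>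
      induction c using WithTop.recTopCoe with
      | top =>
        simp only [WithTop.add_top, ← WithTop.coe_add]
        constructor <;> intro h <;> exact absurd h WithTop.coe_ne_top
      | coe c =>
        simp only [← WithTop.coe_add, WithTop.coe_inj]
        constructor <;> intro h <;> linarith

/-- For a submodular `z`, `S ⊆ T` with `z S, z T < ∞`, and a disjoint
decomposition `T ∖ S = C₁ ∪ C₂`, the function `z' = z_{T/S}` decomposes as the product
`z'|_{C₁} · z'|_{C₂}` iff `z(T) + z(S) = z(S ∪ C₁) + z(S ∪ C₂)`. -/
theorem corestriction_decomposes_iff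
    {I : Type*} [Fintype I] [DecidableEq I]
    (z : Finset I → WithTop ℝ) (hz0 : z ∅ = 0) (hzI : z Finset.univ ≠ ⊤)
    (hsub : Submodular z) (S T : Finset I) (hST : S ⊆ T)
    (hS : z S ≠ ⊤) (hT : z T ≠ ⊤)
    (C₁ C₂ : Finset I) (hdisj : Disjoint C₁ C₂) (hC : C₁ ∪ C₂ = T \ S) :
    (∀ E ⊆ T \ S, coRes z S E = coRes z S (E ∩ C₁) + coRes z S (E ∩ C₂)) ↔
      z T + z S = z (S ∪ C₁) + z (S ∪ C₂) := by
  -- basic set facts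
  have hSd : Disjoint S (T \ S) := Finset.disjoint_sdiff
  have hC1T : C₁ ⊆ T \ S := hC ▸ Finset.subset_union_left
  have hC2T : C₂ ⊆ T \ S := hC ▸ Finset.subset_union_right
  have hTeq : S ∪ (T \ S) = T := Finset.union_sdiff_of_subset hST
  obtain ⟨s, hs⟩ := WithTop.ne_top_iff_exists.mp hS
  have huntop : (z S).untopD 0 = s := by rw [← hs]; rfl
  have hcoR : ∀ U : Finset I, coRes z S U = z (S ∪ U) + ((-s : ℝ) : WithTop ℝ) := by
    intro U; rw [coRes, huntop]
  constructor
  · intro h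
    have h1 : (T \ S) ∩ C₁ = C₁ := Finset.inter_eq_right.mpr hC1T
    have h2 : (T \ S) ∩ C₂ = C₂ := Finset.inter_eq_right.mpr hC2T
    have := h (T \ S) (Finset.Subset.refl _)
    rw [h1, h2, hcoR, hcoR, hcoR, hTeq] at this
    rw [← hs]
    exact withtop_aux.mp this
  · intro h E hE
    set E₁ := E ∩ C₁ with hE₁
    set E₂ := E ∩ C₂ with hE₂
    have hEC : E ⊆ C₁ ∪ C₂ := hC ▸ hE
    have hEun : E₁ ∪ E₂ = E := by
      rw [hE₁, hE₂, ← Finset.inter_union_distrib_left]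
      exact Finset.inter_eq_left.mpr hEC
    have hE1C : E₁ ⊆ C₁ := Finset.inter_subset_right
    have hE2C : E₂ ⊆ C₂ := Finset.inter_subset_right
    have ha12 : z (S ∪ C₁) + z (S ∪ C₂) ≠ ⊤ := by
      rw [← h]; exact WithTop.add_ne_top.mpr ⟨hT, hS⟩
    have ha1 : z (S ∪ C₁) ≠ ⊤ := fun hh => ha12 (by rw [hh, WithTop.top_add])
    have ha2 : z (S ∪ C₂) ≠ ⊤ := fun hh => ha12 (by rw [hh, WithTop.add_top])
    rw [hcoR, hcoR, hcoR, withtop_aux]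
    -- set identities
    have id5 : (S ∪ E) ∩ (S ∪ C₁) = S ∪ E₁ := by
      rw [← Finset.union_inter_distrib_left]
    have id5' : (S ∪ E) ∩ (S ∪ C₂) = S ∪ E₂ := by
      rw [← Finset.union_inter_distrib_left]
    have id4 : (S ∪ E) ∪ (S ∪ C₁) = S ∪ C₁ ∪ E₂ := by
      ext a
      simp only [Finset.mem_union, hE₂, Finset.mem_inter]
      constructor
      · rintro ((hS | hE) | hC1)
        · tauto
        · rcases Finset.mem_union.mp (hEC hE) with h1 | h2 <;> tauto
        · tauto
      · tauto
    have id8 : (S ∪ C₁) ∪ (S ∪ E₂) = S ∪ C₁ ∪ E₂ := by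
      ext a; simp only [Finset.mem_union]; tauto
    have id7 : (S ∪ C₁ ∪ E₂) ∩ (S ∪ C₂) = S ∪ E₂ := by
      ext a
      simp only [Finset.mem_union, Finset.mem_inter]
      constructor
      · rintro ⟨(hS | hC1) | hE2, hb⟩
        · tauto
        · rcases hb with hb | hb
          · tauto
          · exact absurd hb (Finset.disjoint_left.mp hdisj hC1)
        · tauto
      · intro hb
        rcases hb with hb | hb
        · tauto
        · exact ⟨Or.inr hb, Or.inr (hE2C hb)⟩
    have id6 : (S ∪ C₁ ∪ E₂) ∪ (S ∪ C₂) = T := by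
      rw [← hTeq, ← hC]
      ext a; simp only [Finset.mem_union]
      constructor
      · rintro (((h|h)|h)|(h|h)) <;> first | tauto | exact Or.inr (Or.inr (hE2C h))
      · tauto
    have id2 : (S ∪ E₁) ∪ (S ∪ E₂) = S ∪ E := by
      rw [← hEun]; ext a; simp only [Finset.mem_union]; tauto
    have id3 : (S ∪ E₁) ∩ (S ∪ E₂) = S := by
      rw [← Finset.union_inter_distrib_left, hE₁, hE₂, Finset.inter_comm E C₁,
        Finset.inter_comm E C₂, ← Finset.inter_inter_distrib_right,
        Finset.disjoint_iff_inter_eq_empty.mp hdisj, Finset.empty_inter,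
        Finset.union_empty]
    -- submodularity gives ≤
    have hle : z (S ∪ E) + (s : WithTop ℝ) ≤ z (S ∪ E₁) + z (S ∪ E₂) := by
      have := hsub (S ∪ E₁) (S ∪ E₂)
      rw [id2, id3, ← hs] at this
      exact this
    refine le_antisymm hle ?_
    -- reverse: case on finiteness
    by_cases he1 : z (S ∪ E₁) = ⊤
    · -- then z (S ∪ E) = ⊤
      have := hsub (S ∪ E) (S ∪ C₁)
      rw [id5, he1, WithTop.add_top] at this
      have hu : z (S ∪ E) = ⊤ := by
        by_contra hu
        obtain ⟨u, hu⟩ := WithTop.ne_top_iff_exists.mp hu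
        obtain ⟨a1, ha1'⟩ := WithTop.ne_top_iff_exists.mp ha1
        rw [← hu, ← ha1', ← WithTop.coe_add] at this
        exact absurd this (by simp)
      rw [hu, WithTop.top_add]
      exact le_top
    by_cases he2 : z (S ∪ E₂) = ⊤
    · have := hsub (S ∪ E) (S ∪ C₂)
      rw [id5', he2, WithTop.add_top] at this
      have hu : z (S ∪ E) = ⊤ := by
        by_contra hu
        obtain ⟨u, hu⟩ := WithTop.ne_top_iff_exists.mp hu
        obtain ⟨a2, ha2'⟩ := WithTop.ne_top_iff_exists.mp ha2
        rw [← hu, ← ha2', ← WithTop.coe_add] at this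
        exact absurd this (by simp)
      rw [hu, WithTop.top_add]
      exact le_top
    -- all finite: lift to ℝ
    obtain ⟨e1, he1'⟩ := WithTop.ne_top_iff_exists.mp he1
    obtain ⟨e2, he2'⟩ := WithTop.ne_top_iff_exists.mp he2
    obtain ⟨a1, ha1'⟩ := WithTop.ne_top_iff_exists.mp ha1
    obtain ⟨a2, ha2'⟩ := WithTop.ne_top_iff_exists.mp ha2
    obtain ⟨t, ht'⟩ := WithTop.ne_top_iff_exists.mp hT
    have hwfin : z (S ∪ C₁ ∪ E₂) ≠ ⊤ := by
      have := hsub (S ∪ C₁) (S ∪ E₂)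
      rw [id8] at this
      intro hh
      rw [hh, WithTop.top_add, ← ha1', ← he2', ← WithTop.coe_add, top_le_iff] at this
      exact absurd this (by simp)
    obtain ⟨w, hw'⟩ := WithTop.ne_top_iff_exists.mp hwfin
    have hufin : z (S ∪ E) ≠ ⊤ := by
      intro hh
      rw [hh, WithTop.top_add, ← he1', ← he2', ← WithTop.coe_add, top_le_iff] at hle
      exact absurd hle (by simp)
    obtain ⟨u, hu'⟩ := WithTop.ne_top_iff_exists.mp hufin
    -- star: w + e1 ≤ u + a1
    have hstar := hsub (S ∪ E) (S ∪ C₁)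
    rw [id4, id5, ← he1', ← ha1', ← hu', ← hw', ← WithTop.coe_add, ← WithTop.coe_add,
      WithTop.coe_le_coe] at hstar
    have hstar2 := hsub (S ∪ C₁ ∪ E₂) (S ∪ C₂)
    rw [id6, id7, ← he2', ← ha2', ← ht', ← hw', ← WithTop.coe_add, ← WithTop.coe_add,
      WithTop.coe_le_coe] at hstar2
    have hhyp : t + s = a1 + a2 := by
      rw [← ht', ← ha1', ← ha2', ← hs, ← WithTop.coe_add, ← WithTop.coe_add,
        WithTop.coe_inj] at h
      exact h
    rw [← he1', ← he2', ← hu', ← WithTop.coe_add, ← WithTop.coe_add, WithTop.coe_le_coe]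
    linarith
end

section
/- If a submodular function z on I = S ⊔ T decomposes as a product z = u·v, where u is submodular on S and v is submodular on T, then under the identification ℝ^I ≅ ℝ^S × ℝ^T the extended generalized permutahedron Π(z) equals the product Π(u) × Π(v). -/
open scoped Classical

/-- If a submodular function `z` on `I = S ⊔ T` decomposes as a product
`z = u · v` of submodular functions on `S` and `T`, then under `ℝ^I ≅ ℝ^S × ℝ^T` the
extended generalized permutahedron `Π(z)` is the product `Π(u) × Π(v)`. -/
theorem EGP_product
    {S T : Type*} [Fintype S] [Fintype T] [DecidableEq S] [DecidableEq T]
    (u : Finset S → WithTop ℝ) (hu0 : u ∅ = 0) (huI : u Finset.univ ≠ ⊤) (hu : Submodular u)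
    (v : Finset T → WithTop ℝ) (hv0 : v ∅ = 0) (hvI : v Finset.univ ≠ ⊤) (hv : Submodular v)
    (z : Finset (S ⊕ T) → WithTop ℝ) (hz : Submodular z)
    (hzuv : ∀ E : Finset (S ⊕ T), z E = u E.toLeft + v E.toRight) :
    EGP z = {x : S ⊕ T → ℝ |
      (fun s : S => x (Sum.inl s)) ∈ EGP u ∧ (fun t : T => x (Sum.inr t)) ∈ EGP v} := by
  ext x
  obtain ⟨a, ha⟩ := WithTop.ne_top_iff_exists.mp huI
  obtain ⟨b, hb⟩ := WithTop.ne_top_iff_exists.mp hvI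
  have h1 : (Finset.univ : Finset (S ⊕ T)).toLeft = Finset.univ := by ext s; simp
  have h2 : (Finset.univ : Finset (S ⊕ T)).toRight = Finset.univ := by ext t; simp
  have hsplit : ∀ E : Finset (S ⊕ T),
      (∑ i ∈ E, x i) = (∑ s ∈ E.toLeft, x (Sum.inl s)) + ∑ t ∈ E.toRight, x (Sum.inr t) := by
    intro E
    conv_lhs => rw [← E.toLeft_disjSum_toRight]
    rw [Finset.sum_disjSum]
  have hzU : z Finset.univ = u Finset.univ + v Finset.univ := by
    rw [hzuv, h1, h2]
  set p : ℝ := ∑ s, x (Sum.inl s) with hp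
  set q : ℝ := ∑ t, x (Sum.inr t) with hq
  simp only [EGP, Set.mem_setOf_eq]
  constructor
  · rintro ⟨hI, hA⟩
    have hsum : (∑ i, x i : ℝ) = p + q := by rw [hsplit Finset.univ, h1, h2]
    have hIpq : p + q = a + b := by
      have h : ((p + q : ℝ) : WithTop ℝ) = ((a + b : ℝ) : WithTop ℝ) := by
        rw [← hsum, hI, hzU, ← ha, ← hb, WithTop.coe_add]
      exact WithTop.coe_inj.mp h
    have hpa : p ≤ a := by
      have := hA ((Finset.univ : Finset S).disjSum (∅ : Finset T))
      rw [hzuv, Finset.toLeft_disjSum, Finset.toRight_disjSum, hv0, Finset.sum_disjSum] at this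
      simp only [Finset.sum_empty, add_zero] at this
      rw [← ha] at this
      exact_mod_cast this
    have hqb : q ≤ b := by
      have := hA ((∅ : Finset S).disjSum (Finset.univ : Finset T))
      rw [hzuv, Finset.toLeft_disjSum, Finset.toRight_disjSum, hu0, Finset.sum_disjSum] at this
      simp only [Finset.sum_empty, zero_add] at this
      rw [← hb] at this
      exact_mod_cast this
    have hpa' : p = a := by linarith
    have hqb' : q = b := by linarith
    refine ⟨⟨by rw [← hp, hpa', ha], fun B => ?_⟩, ⟨by rw [← hq, hqb', hb], fun B => ?_⟩⟩
    · have := hA (B.disjSum (Finset.univ : Finset T))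
      rw [hzuv, Finset.toLeft_disjSum, Finset.toRight_disjSum, Finset.sum_disjSum, ← hb] at this
      cases hc : u B with
      | top => exact le_top
      | coe c =>
        rw [hc, ← WithTop.coe_add, ← hq, hqb'] at this
        have := WithTop.coe_le_coe.mp this
        exact WithTop.coe_le_coe.mpr (by linarith)
    · have := hA ((Finset.univ : Finset S).disjSum B)
      rw [hzuv, Finset.toLeft_disjSum, Finset.toRight_disjSum, Finset.sum_disjSum, ← ha] at this
      cases hc : v B with
      | top => exact le_top
      | coe c =>
        rw [hc, ← WithTop.coe_add, ← hp, hpa'] at this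
        have := WithTop.coe_le_coe.mp this
        exact WithTop.coe_le_coe.mpr (by linarith)
  · rintro ⟨⟨hpu, hAu⟩, ⟨hqv, hAv⟩⟩
    constructor
    · rw [hsplit Finset.univ, h1, h2, hzU, WithTop.coe_add, ← hp, ← hq, hpu, hqv]
    · intro A
      rw [hsplit A, hzuv, WithTop.coe_add]
      exact add_le_add (hAu A.toLeft) (hAv A.toRight)
end

section
/- Let z be a submodular function on a finite set I and let L be a linear extension of the preorder pre(z). Then the affine linear space Alin(L, z) is contained in Π(z). In particular: (i) Alin(L, z) is nonempty and hence Π(z) is nonempty; (ii) for each S ⊆ I with z(S) < ∞, equality x_S = z(S) is attained for some x ∈ Π(z). -/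
open scoped Classical

section AuxProof

variable {I : Type*} [Fintype I] [DecidableEq I]

namespace AlinAux

variable (z : Finset I → WithTop ℝ)

/-- real value of z -/
noncomputable def rz (A : Finset I) : ℝ := (z A).untopD 0

lemma coe_rz {A : Finset I} (h : z A ≠ ⊤) : ((rz z A : ℝ) : WithTop ℝ) = z A := by
  unfold rz; lift z A to ℝ using h with r; rfl

variable (hz0 : z ∅ = 0) (hzI : z Finset.univ ≠ ⊤) (hsub : Submodular z)

set_option linter.unusedSectionVars false

include hsub in

lemma open_union {S T : Finset I} (hS : z S ≠ ⊤) (hT : z T ≠ ⊤) :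
    z (S ∪ T) ≠ ⊤ ∧ z (S ∩ T) ≠ ⊤ := by
  have h := hsub S T
  have hne : z S + z T ≠ ⊤ := WithTop.add_ne_top.2 ⟨hS, hT⟩
  have := ne_top_of_le_ne_top hne h
  exact WithTop.add_ne_top.1 this

include hsub in
lemma rz_submod {S T : Finset I} (hS : z S ≠ ⊤) (hT : z T ≠ ⊤) :
    rz z (S ∪ T) + rz z (S ∩ T) ≤ rz z S + rz z T := by
  have h := hsub S T
  obtain ⟨hU, hI2⟩ := open_union z hsub hS hT
  rw [← coe_rz z hU, ← coe_rz z hI2, ← coe_rz z hS, ← coe_rz z hT] at h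
  rw [← WithTop.coe_add, ← WithTop.coe_add] at h
  exact_mod_cast h

include hz0 hsub in
lemma z_sup_ne_top {J : Type*} (G : Finset J) (f : J → Finset I)
    (h : ∀ a ∈ G, z (f a) ≠ ⊤) : z (G.sup f) ≠ ⊤ := by
  classical
  induction G using Finset.cons_induction with
  | empty => simpa [hz0] using (by simp [hz0] : z (⊥ : Finset I) ≠ ⊤)
  | cons a s ha ih =>
    rw [Finset.sup_cons]
    have h1 : z (f a) ≠ ⊤ := h a (Finset.mem_cons_self a s)
    have h2 : z (s.sup f) ≠ ⊤ := ih fun b hb => h b (Finset.mem_cons_of_mem hb)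
    exact (open_union z hsub h1 h2).1

include hzI hsub in
lemma z_inf_ne_top (G : Finset (Finset I)) (h : ∀ A ∈ G, z A ≠ ⊤) :
    z (G.inf id) ≠ ⊤ := by
  classical
  induction G using Finset.cons_induction with
  | empty => simpa [Finset.top_eq_univ] using hzI
  | cons a s ha ih =>
    rw [Finset.inf_cons]
    have h1 : z a ≠ ⊤ := h a (Finset.mem_cons_self a s)
    have h2 : z (s.inf id) ≠ ⊤ := ih fun b hb => h b (Finset.mem_cons_of_mem hb)
    exact (open_union z hsub h1 h2).2

/-- the principal down-set of `a` for `pre(z)` -/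
noncomputable def down (a : I) : Finset I := Finset.univ.filter fun x => (preZ z).le x a

include hzI hsub in
lemma down_open (a : I) : z (down z a) ≠ ⊤ := by
  classical
  have : down z a = (Finset.univ.filter fun A : Finset I => z A ≠ ⊤ ∧ a ∈ A).inf id := by
    ext x
    simp only [down, Finset.mem_filter, Finset.mem_univ, true_and, Finset.mem_inf, id]
    constructor
    · intro h A hA; exact h A hA.1 hA.2
    · intro h A hA haA; exact h A ⟨hA, haA⟩
  rw [this]
  exact z_inf_ne_top z hzI hsub _ (fun A hA => (Finset.mem_filter.1 hA).2.1)

include hz0 hzI hsub in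
lemma open_of_pre_downset {A : Finset I} (hA : (preZ z).IsDownset A) : z A ≠ ⊤ := by
  classical
  have hAe : A = A.sup (down z) := by
    ext x
    simp only [Finset.mem_sup]
    constructor
    · intro hx; exact ⟨x, hx, by simp [down, Preo.le_refl]⟩
    · rintro ⟨a, ha, hx⟩
      simp only [down, Finset.mem_filter] at hx
      exact hA ha hx.2
  rw [hAe]
  exact z_sup_ne_top z hz0 hsub _ _ (fun a _ => down_open z hzI hsub a)

lemma pre_downset_of_open {A : Finset I} (hA : z A ≠ ⊤) : (preZ z).IsDownset A :=
  fun _ _ hy hxy => hxy A hA hy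

end AlinAux

end AuxProof

section AuxProof2

variable {I : Type*} [Fintype I] [DecidableEq I]

namespace AlinAux

set_option linter.unusedSectionVars false

variable (z : Finset I → WithTop ℝ) (L : Preo I)

/-- the principal down-set `{j : j ≤ i}` -/
noncomputable def Ale (i : I) : Finset I := Finset.univ.filter fun j => L.le j i

/-- the strict principal down-set `{j : j ≤ i, i ≰ j}` -/
noncomputable def Alt (i : I) : Finset I :=
  Finset.univ.filter fun j => L.le j i ∧ ¬ L.le i j

lemma mem_Ale {i j : I} : j ∈ Ale L i ↔ L.le j i := by simp [Ale]

lemma mem_Alt {i j : I} : j ∈ Alt L i ↔ L.le j i ∧ ¬ L.le i j := by simp [Alt]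

lemma mem_bubble {i j : I} : j ∈ L.bubble i ↔ L.le i j ∧ L.le j i := by simp [Preo.bubble]

lemma Ale_downset (i : I) : L.IsDownset (Ale L i) := by
  intro x y hy hxy
  rw [mem_Ale] at hy ⊢
  exact L.le_trans hxy hy

lemma Alt_downset (i : I) : L.IsDownset (Alt L i) := by
  intro x y hy hxy
  rw [mem_Alt] at hy ⊢
  refine ⟨L.le_trans hxy hy.1, fun h => hy.2 (L.le_trans h hxy)⟩

lemma bubble_eq (i : I) : L.bubble i = Ale L i \ Alt L i := by
  ext x
  simp only [mem_bubble, Finset.mem_sdiff, mem_Ale, mem_Alt]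
  tauto

lemma Alt_eq (i : I) : Alt L i = Ale L i \ L.bubble i := by
  ext x
  simp only [mem_bubble, Finset.mem_sdiff, mem_Ale, mem_Alt]
  tauto

lemma Alt_subset_Ale (i : I) : Alt L i ⊆ Ale L i := by
  intro x hx; rw [mem_Alt] at hx; exact (mem_Ale L).2 hx.1

lemma bubble_subset_Ale (i : I) : L.bubble i ⊆ Ale L i := by
  intro x hx; rw [mem_bubble] at hx; exact (mem_Ale L).2 hx.2

lemma Ale_congr {i b : I} (hb : b ∈ L.bubble i) : Ale L b = Ale L i := by
  rw [mem_bubble] at hb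
  ext x
  rw [mem_Ale, mem_Ale]
  exact ⟨fun h => L.le_trans h hb.2, fun h => L.le_trans h hb.1⟩

lemma Alt_congr {i b : I} (hb : b ∈ L.bubble i) : Alt L b = Alt L i := by
  rw [mem_bubble] at hb
  ext x
  rw [mem_Alt, mem_Alt]
  constructor
  · rintro ⟨h1, h2⟩
    exact ⟨L.le_trans h1 hb.2, fun h => h2 (L.le_trans hb.2 h)⟩
  · rintro ⟨h1, h2⟩
    exact ⟨L.le_trans h1 hb.1, fun h => h2 (L.le_trans hb.1 h)⟩

lemma bubble_congr {i b : I} (hb : b ∈ L.bubble i) : L.bubble b = L.bubble i := by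
  rw [bubble_eq, bubble_eq, Ale_congr L hb, Alt_congr L hb]

lemma pre_downset_of_L_downset (hL : Preo.IsLinExt (preZ z) L) {A : Finset I} (hA : L.IsDownset A) :
    (preZ z).IsDownset A := fun x y hy hxy => hA hy (hL.2.1 hxy)

lemma open_of_L_downset (hz0 : z ∅ = 0) (hzI : z Finset.univ ≠ ⊤)
    (hsub : Submodular z) (hL : Preo.IsLinExt (preZ z) L) {A : Finset I} (hA : L.IsDownset A) : z A ≠ ⊤ :=
  open_of_pre_downset z hz0 hzI hsub (pre_downset_of_L_downset z L hL hA)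

lemma bubble_subset_open (hL : Preo.IsLinExt (preZ z) L) {S : Finset I} (hS : z S ≠ ⊤) {i : I} (hi : i ∈ S) :
    L.bubble i ⊆ S := by
  intro b hb
  rw [mem_bubble] at hb
  have hpre : (preZ z).bubRel i b := (hL.2.2 i b).mpr ⟨hb.1, hb.2⟩
  exact hpre.2 S hS hi

lemma exists_top (hL : Preo.IsLinExt (preZ z) L) {A : Finset I} (hA : A.Nonempty) : ∃ i ∈ A, ∀ j ∈ A, L.le j i := by
  classical
  induction A using Finset.cons_induction with
  | empty => exact absurd hA (by simp)
  | cons a s ha ih =>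
    rcases s.eq_empty_or_nonempty with hs | hs
    · subst hs
      exact ⟨a, Finset.mem_cons_self a _, by simp [L.le_refl]⟩
    · obtain ⟨i, hi, hmax⟩ := ih hs
      rcases hL.1 a i with h | h
      · refine ⟨i, Finset.mem_cons_of_mem hi, fun j hj => ?_⟩
        rcases Finset.mem_cons.1 hj with rfl | hj
        · exact h
        · exact hmax j hj
      · refine ⟨a, Finset.mem_cons_self a _, fun j hj => ?_⟩
        rcases Finset.mem_cons.1 hj with rfl | hj
        · exact L.le_refl j
        · exact L.le_trans (hmax j hj) h

lemma downset_eq_Ale {A : Finset I} (hA : L.IsDownset A) {i : I} (hi : i ∈ A)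
    (hmax : ∀ j ∈ A, L.le j i) : A = Ale L i := by
  ext x
  rw [mem_Ale]
  exact ⟨fun hx => hmax x hx, fun hx => hA hi hx⟩

lemma rz_empty (hz0 : z ∅ = 0) : rz z ∅ = 0 := by simp [rz, hz0]

lemma alin_sum_eq {x : I → ℝ} (hx : x ∈ Alin z L) {A : Finset I} (hA : L.IsDownset A)
    (hAo : z A ≠ ⊤) : ∑ i ∈ A, x i = rz z A := by
  have h := hx A hA
  rw [← coe_rz z hAo] at h
  exact_mod_cast h

lemma sum_le_open (hz0 : z ∅ = 0) (hzI : z Finset.univ ≠ ⊤)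
    (hsub : Submodular z) (hL : Preo.IsLinExt (preZ z) L) {x : I → ℝ} (hx : x ∈ Alin z L) :
    ∀ S : Finset I, z S ≠ ⊤ → ∑ i ∈ S, x i ≤ rz z S := by
  classical
  intro S
  induction S using Finset.strongInduction with
  | _ S ih =>
    intro hS
    rcases S.eq_empty_or_nonempty with rfl | hSne
    · simp [rz_empty z hz0]
    · obtain ⟨i, hiS, hmax⟩ := exists_top z L hL hSne
      set B := L.bubble i with hB
      have hBS : B ⊆ S := bubble_subset_open z L hL hS hiS
      have hAle_ds := Ale_downset L i
      have hAlt_ds := Alt_downset L i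
      have hAleo : z (Ale L i) ≠ ⊤ := open_of_L_downset z L hz0 hzI hsub hL hAle_ds
      have hAlto : z (Alt L i) ≠ ⊤ := open_of_L_downset z L hz0 hzI hsub hL hAlt_ds
      have hTo : z (S ∩ Alt L i) ≠ ⊤ := (open_union z hsub hS hAlto).2
      have hSB : S \ B = S ∩ Alt L i := by
        ext x
        simp only [Finset.mem_sdiff, Finset.mem_inter, hB, mem_bubble, mem_Alt]
        constructor
        · rintro ⟨hxS, hxB⟩
          have hxi : L.le x i := hmax x hxS
          exact ⟨hxS, hxi, fun h => hxB ⟨h, hxi⟩⟩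
        · rintro ⟨hxS, h1, h2⟩
          exact ⟨hxS, fun h => h2 h.1⟩
      have hUnion : S ∪ Alt L i = Ale L i := by
        apply Finset.Subset.antisymm
        · intro x hx
          rcases Finset.mem_union.1 hx with h | h
          · exact (mem_Ale L).2 (hmax x h)
          · exact Alt_subset_Ale L i h
        · intro x hx
          by_cases hxi : L.le i x
          · exact Finset.mem_union_left _ (hBS ((mem_bubble L).2 ⟨hxi, (mem_Ale L).1 hx⟩))
          · exact Finset.mem_union_right _ ((mem_Alt L).2 ⟨(mem_Ale L).1 hx, hxi⟩)
      have hsubmod := rz_submod z hsub hS hAlto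
      rw [hUnion] at hsubmod
      have hsplitS : ∑ j ∈ S \ B, x j + ∑ j ∈ B, x j = ∑ j ∈ S, x j :=
        Finset.sum_sdiff hBS
      have hsplitA : ∑ j ∈ Ale L i \ Alt L i, x j + ∑ j ∈ Alt L i, x j
          = ∑ j ∈ Ale L i, x j := Finset.sum_sdiff (Alt_subset_Ale L i)
      rw [← bubble_eq] at hsplitA
      have hAleeq := alin_sum_eq z L hx hAle_ds hAleo
      have hAlteq := alin_sum_eq z L hx hAlt_ds hAlto
      have hT_lt : S \ B ⊂ S := by
        refine Finset.sdiff_ssubset ?_ ?_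
        · exact hBS
        · exact ⟨i, (mem_bubble L).2 ⟨L.le_refl i, L.le_refl i⟩⟩
      have hIH : ∑ j ∈ S \ B, x j ≤ rz z (S \ B) := by
        refine ih _ hT_lt ?_
        rw [hSB]; exact hTo
      rw [hSB] at hIH hsplitS
      rw [← hB] at hsplitA
      linarith [hsubmod, hIH, hsplitS, hsplitA, hAleeq, hAlteq]

/-- the canonical point of `Alin z L` -/
noncomputable def yvec : I → ℝ :=
  fun i => (rz z (Ale L i) - rz z (Alt L i)) / (L.bubble i).card

lemma sum_yvec_downset (hz0 : z ∅ = 0) (hzI : z Finset.univ ≠ ⊤)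
    (hsub : Submodular z) (hL : Preo.IsLinExt (preZ z) L) : ∀ A : Finset I, L.IsDownset A → ∑ i ∈ A, yvec z L i = rz z A := by
  classical
  intro A
  induction A using Finset.strongInduction with
  | _ A ih =>
    intro hA
    rcases A.eq_empty_or_nonempty with rfl | hAne
    · simp [rz_empty z hz0]
    · obtain ⟨i, hiA, hmax⟩ := exists_top z L hL hAne
      have hAeq : A = Ale L i := downset_eq_Ale L hA hiA hmax
      set B := L.bubble i with hBdef
      have hiB : i ∈ B := (mem_bubble L).2 ⟨L.le_refl i, L.le_refl i⟩
      have hBA : B = A \ Alt L i := by rw [hAeq, ← bubble_eq]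
      have hAltA : Alt L i ⊂ A := by
        rw [hAeq]
        refine Finset.ssubset_iff_of_subset (Alt_subset_Ale L i) |>.2 ?_
        exact ⟨i, (mem_Ale L).2 (L.le_refl i), fun h => ((mem_Alt L).1 h).2 (L.le_refl i)⟩
      have hsplit : ∑ j ∈ A \ Alt L i, yvec z L j + ∑ j ∈ Alt L i, yvec z L j
          = ∑ j ∈ A, yvec z L j := Finset.sum_sdiff (hAltA.subset)
      have hIH : ∑ j ∈ Alt L i, yvec z L j = rz z (Alt L i) :=
        ih _ hAltA (Alt_downset L i)
      have hBsum : ∑ j ∈ B, yvec z L j = rz z (Ale L i) - rz z (Alt L i) := by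
        have hconst : ∀ b ∈ B, yvec z L b
            = (rz z (Ale L i) - rz z (Alt L i)) / (B.card : ℝ) := by
          intro b hb
          unfold yvec
          rw [Ale_congr L hb, Alt_congr L hb, bubble_congr L hb]
        rw [Finset.sum_congr rfl hconst, Finset.sum_const, nsmul_eq_mul]
        have hcard : (B.card : ℝ) ≠ 0 := by
          have : 0 < B.card := Finset.card_pos.2 ⟨i, hiB⟩
          positivity
        field_simp
      rw [← hsplit, ← hBA, hBsum, hIH, hAeq]
      ring

lemma yvec_mem_alin (hz0 : z ∅ = 0) (hzI : z Finset.univ ≠ ⊤)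
    (hsub : Submodular z) (hL : Preo.IsLinExt (preZ z) L) : yvec z L ∈ Alin z L := by
  intro A hA
  rw [sum_yvec_downset z L hz0 hzI hsub hL A hA,
    coe_rz z (open_of_L_downset z L hz0 hzI hsub hL hA)]

lemma alin_subset_egp (hz0 : z ∅ = 0) (hzI : z Finset.univ ≠ ⊤)
    (hsub : Submodular z) (hL : Preo.IsLinExt (preZ z) L) : Alin z L ⊆ EGP z := by
  intro x hx
  constructor
  · exact hx Finset.univ (fun a b _ _ => Finset.mem_univ a)
  · intro A
    by_cases hA : z A = ⊤
    · rw [hA]; exact le_top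
    · rw [← coe_rz z hA]
      exact_mod_cast sum_le_open z L hz0 hzI hsub hL hx A hA

end AlinAux

end AuxProof2

section AuxProof3

variable {I : Type*} [Fintype I] [DecidableEq I]

namespace AlinAux

/-- refine `L` so that `S` becomes a down-set -/
def LS (L : Preo I) (S : Finset I) : Preo I where
  le a b := (a ∈ S ∧ b ∉ S) ∨ ((a ∈ S ↔ b ∈ S) ∧ L.le a b)
  le_refl x := Or.inr ⟨Iff.rfl, L.le_refl x⟩
  le_trans := by
    rintro a b c (⟨ha, hb⟩ | ⟨hab, h1⟩) (⟨hb', hc⟩ | ⟨hbc, h2⟩)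
    · exact absurd hb' hb
    · exact Or.inl ⟨ha, fun hc' => hb (hbc.mpr hc')⟩
    · exact Or.inl ⟨hab.mpr hb', hc⟩
    · exact Or.inr ⟨hab.trans hbc, L.le_trans h1 h2⟩

lemma S_downset_LS (L : Preo I) (S : Finset I) : (LS L S).IsDownset S := by
  rintro x y hy (⟨hx, hy'⟩ | ⟨hiff, _⟩)
  · exact absurd hy hy'
  · exact hiff.mpr hy

lemma LS_isLinExt (z : Finset I → WithTop ℝ) (L : Preo I) {S : Finset I}
    (hS : z S ≠ ⊤) (hL : Preo.IsLinExt (preZ z) L) :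
    Preo.IsLinExt (preZ z) (LS L S) := by
  refine ⟨?_, ?_, ?_⟩
  · -- Total
    intro a b
    by_cases haS : a ∈ S <;> by_cases hbS : b ∈ S
    · rcases hL.1 a b with h | h
      · exact Or.inl (Or.inr ⟨iff_of_true haS hbS, h⟩)
      · exact Or.inr (Or.inr ⟨iff_of_true hbS haS, h⟩)
    · exact Or.inl (Or.inl ⟨haS, hbS⟩)
    · exact Or.inr (Or.inl ⟨hbS, haS⟩)
    · rcases hL.1 a b with h | h
      · exact Or.inl (Or.inr ⟨iff_of_false haS hbS, h⟩)
      · exact Or.inr (Or.inr ⟨iff_of_false hbS haS, h⟩)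
  · -- extends pre(z)
    intro a b h
    by_cases hbS : b ∈ S
    · exact Or.inr ⟨iff_of_true (h S hS hbS) hbS, hL.2.1 h⟩
    · by_cases haS : a ∈ S
      · exact Or.inl ⟨haS, hbS⟩
      · exact Or.inr ⟨iff_of_false haS hbS, hL.2.1 h⟩
  · -- same bubbles
    intro a b
    constructor
    · intro h
      have hiff : a ∈ S ↔ b ∈ S := ⟨fun ha => h.2 S hS ha, fun hb => h.1 S hS hb⟩
      have hLb := (hL.2.2 a b).mp h
      exact ⟨Or.inr ⟨hiff, hLb.1⟩, Or.inr ⟨hiff.symm, hLb.2⟩⟩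
    · rintro ⟨h1 | h1, h2 | h2⟩
      · exact absurd h2.1 h1.2
      · exact absurd (h2.1.mpr h1.1) h1.2
      · exact absurd (h1.1.mpr h2.1) h2.2
      · exact (hL.2.2 a b).mpr ⟨h1.2, h2.2⟩

end AlinAux

end AuxProof3

/-- For `z` submodular and `L` a linear extension of `pre(z)`:
`Alin(L, z) ⊆ Π(z)`; in particular `Alin(L, z)` and `Π(z)` are nonempty, and for each `S`
with `z(S) < ∞` the equality `x_S = z(S)` is attained at some point of `Π(z)`. -/
theorem alin_subset_EGP
    {I : Type*} [Fintype I] [DecidableEq I]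
    (z : Finset I → WithTop ℝ) (hz0 : z ∅ = 0) (hzI : z Finset.univ ≠ ⊤)
    (hsub : Submodular z) (L : Preo I) (hL : Preo.IsLinExt (preZ z) L) :
    Alin z L ⊆ EGP z ∧ (Alin z L).Nonempty ∧ (EGP z).Nonempty ∧
      ∀ S : Finset I, z S ≠ ⊤ →
        ∃ x ∈ EGP z, ((∑ i ∈ S, x i : ℝ) : WithTop ℝ) = z S := by
  have hmain := AlinAux.alin_subset_egp z L hz0 hzI hsub hL
  have hmem : AlinAux.yvec z L ∈ Alin z L := AlinAux.yvec_mem_alin z L hz0 hzI hsub hL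
  refine ⟨hmain, ⟨_, hmem⟩, ⟨_, hmain hmem⟩, ?_⟩
  intro S hS
  set L' := AlinAux.LS L S with hL'def
  have hL' : Preo.IsLinExt (preZ z) L' := AlinAux.LS_isLinExt z L hS hL
  have hmem' : AlinAux.yvec z L' ∈ Alin z L' := AlinAux.yvec_mem_alin z L' hz0 hzI hsub hL'
  refine ⟨AlinAux.yvec z L', AlinAux.alin_subset_egp z L' hz0 hzI hsub hL' hmem', ?_⟩
  exact hmem' S (AlinAux.S_downset_LS L S)
end

section
/- Let z be a submodular function on the finite set I. The family of subsets A ⊆ I such that x_A = z(A) holds for every x ∈ Π(z) is a topology on I, and it equals the totally disconnected topology ctop(z) whose open sets are the unions of supports of indecomposable factors of z. In particular, if z is indecomposable, then for every A with ∅ ≠ A ≠ I and z(A) < ∞, the set {x ∈ Π(z) : x_A = z(A)} is a proper nonempty face of Π(z). -/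
open scoped Classical

section CtopHelpers

variable {I : Type*} [Fintype I] [DecidableEq I]

/-- Real value of `z A` (the "untopped" value). -/
noncomputable def rz (z : Finset I → WithTop ℝ) (A : Finset I) : ℝ := (z A).untopD 0

lemma coe_rz {z : Finset I → WithTop ℝ} {A : Finset I} (h : z A ≠ ⊤) :
    ((rz z A : ℝ) : WithTop ℝ) = z A := by
  obtain ⟨a, ha⟩ := WithTop.ne_top_iff_exists.mp h
  rw [rz, ← ha]
  simp

lemma le_rz {z : Finset I → WithTop ℝ} {A : Finset I} (h : z A ≠ ⊤) {a : ℝ}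
    (hle : (a : WithTop ℝ) ≤ z A) : a ≤ rz z A := by
  rw [← coe_rz h] at hle
  exact_mod_cast hle

lemma rz_empty {z : Finset I → WithTop ℝ} (hz0 : z ∅ = 0) : rz z ∅ = 0 := by
  rw [rz, hz0]; rfl

lemma lattice_step {z : Finset I → WithTop ℝ} (hsub : Submodular z) {S T : Finset I}
    (hS : z S ≠ ⊤) (hT : z T ≠ ⊤) :
    z (S ∪ T) ≠ ⊤ ∧ z (S ∩ T) ≠ ⊤ ∧ rz z (S ∪ T) + rz z (S ∩ T) ≤ rz z S + rz z T := by
  have h := hsub S T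
  have hst : z S + z T ≠ ⊤ := WithTop.add_ne_top.mpr ⟨hS, hT⟩
  have hne : z (S ∪ T) + z (S ∩ T) ≠ ⊤ := fun htop => hst (top_le_iff.mp (htop ▸ h))
  obtain ⟨h1, h2⟩ := WithTop.add_ne_top.mp hne
  refine ⟨h1, h2, ?_⟩
  rw [← coe_rz h1, ← coe_rz h2, ← coe_rz hS, ← coe_rz hT, ← WithTop.coe_add,
    ← WithTop.coe_add, WithTop.coe_le_coe] at h
  exact h

lemma greedy_exists {z : Finset I → WithTop ℝ} (hz0 : z ∅ = 0) (hzI : z Finset.univ ≠ ⊤)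
    (hsub : Submodular z) (A : Finset I) (hA : z A ≠ ⊤) :
    ∃ x ∈ EGP z, ∑ i ∈ A, x i = rz z A := by
  classical
  have hOempty : z (∅ : Finset I) ≠ ⊤ := by rw [hz0]; exact fun h => by simp at h
  -- step existence
  have hstep : ∀ C : Finset I, ∃ D : Finset I,
      (z C ≠ ⊤ → (C ⊆ A ∨ A ⊆ C) →
        (z D ≠ ⊤ ∧ (D ⊆ A ∨ A ⊆ D) ∧
         (C ≠ Finset.univ → C ⊂ D) ∧
         (¬ A ⊆ C → D ⊆ A) ∧
         (∀ S, z S ≠ ⊤ → C ⊆ S → S ⊆ D → S = C ∨ S = D))) ∧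
      (C = Finset.univ → D = C) := by
    intro C
    by_cases hCuniv : C = Finset.univ
    · refine ⟨C, fun h1 _ => ⟨h1, Or.inr (hCuniv ▸ Finset.subset_univ A), ?_, ?_, ?_⟩,
        fun _ => rfl⟩
      · exact fun h => absurd hCuniv h
      · intro h; exact absurd (hCuniv ▸ Finset.subset_univ A) h
      · intro S _ hCS hSC; exact Or.inl (le_antisymm hSC hCS)
    · by_cases hC : z C ≠ ⊤ ∧ (C ⊆ A ∨ A ⊆ C)
      · have hT : ∃ T : Finset I, z T ≠ ⊤ ∧ C ⊂ T ∧ (¬ A ⊆ C → T ⊆ A) := by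
          by_cases hAC : A ⊆ C
          · exact ⟨Finset.univ, hzI, Finset.ssubset_univ_iff.mpr hCuniv,
              fun h => absurd hAC h⟩
          · have hCA : C ⊆ A := by
              rcases hC.2 with h | h
              · exact h
              · exact absurd h hAC
            exact ⟨A, hA, Finset.ssubset_iff_subset_ne.mpr
              ⟨hCA, fun h => hAC (h ▸ Finset.Subset.refl C)⟩, fun _ => Finset.Subset.refl A⟩
        obtain ⟨T, hTne, hCT, hTA⟩ := hT
        set Fam := Finset.univ.powerset.filter (fun S => z S ≠ ⊤ ∧ C ⊂ S ∧ S ⊆ T) with hFam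
        have hne : Fam.Nonempty :=
          ⟨T, by simp [hFam, Finset.mem_filter, hTne, hCT, Finset.Subset.refl]⟩
        obtain ⟨D, hD', hmin'⟩ := Finset.exists_minimal hne
        have hD : D ∈ Fam := hD'
        have hmin : ∀ S ∈ Fam, ¬ S < D := fun S hS hlt =>
          (lt_iff_le_not_ge.mp hlt).2 (hmin' hS hlt.le)
        rw [hFam, Finset.mem_filter] at hD
        obtain ⟨-, hDne, hCD, hDT⟩ := hD
        refine ⟨D, fun _ _ => ⟨hDne, ?_, fun _ => hCD, fun h => hDT.trans (hTA h), ?_⟩,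
          fun h => absurd h hCuniv⟩
        · by_cases hAC : A ⊆ C
          · exact Or.inr (hAC.trans hCD.subset)
          · exact Or.inl (hDT.trans (hTA hAC))
        · intro S hSne hCS hSD
          by_cases hSC : S = C
          · exact Or.inl hSC
          · right
            have hSF : S ∈ Fam := by
              rw [hFam, Finset.mem_filter]
              exact ⟨Finset.mem_powerset.mpr (Finset.subset_univ S),
                hSne, Finset.ssubset_iff_subset_ne.mpr ⟨hCS, Ne.symm hSC⟩, hSD.trans hDT⟩
            have hmn := hmin S hSF
            have hle : S ≤ D := hSD
            rcases hle.lt_or_eq with h | h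
            · exact absurd h hmn
            · exact h
      · exact ⟨C, fun h1 h2 => absurd ⟨h1, h2⟩ hC, fun h => absurd h hCuniv⟩
  choose step hstep1 hstep2 using hstep
  set c : ℕ → Finset I := fun n => step^[n] ∅ with hc
  have c0 : c 0 = ∅ := rfl
  have csucc : ∀ n, c (n + 1) = step (c n) := fun n => Function.iterate_succ_apply' step n ∅
  have hinv : ∀ n, z (c n) ≠ ⊤ ∧ (c n ⊆ A ∨ A ⊆ c n) := by
    intro n
    induction n with
    | zero => exact ⟨hOempty, Or.inl (Finset.empty_subset A)⟩
    | succ k ih =>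
      rw [csucc k]
      have h := hstep1 (c k) ih.1 ih.2
      exact ⟨h.1, h.2.1⟩
  have hstay : ∀ n, c n = Finset.univ → c (n + 1) = c n := by
    intro n h; rw [csucc n]; exact hstep2 (c n) h
  have hgrow : ∀ n, c n ≠ Finset.univ → c n ⊂ c (n + 1) := by
    intro n h
    rw [csucc n]
    exact (hstep1 (c n) (hinv n).1 (hinv n).2).2.2.1 h
  have hmono : Monotone c := by
    apply monotone_nat_of_le_succ
    intro n
    by_cases h : c n = Finset.univ
    · rw [hstay n h]
    · exact (hgrow n h).subset
  have hnob : ∀ n S, z S ≠ ⊤ → c n ⊆ S → S ⊆ c (n + 1) → S = c n ∨ S = c (n + 1) := by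
    intro n S hS h1 h2
    by_cases h : c n = Finset.univ
    · rw [hstay n h] at h2; exact Or.inl (le_antisymm h2 h1)
    · rw [csucc n] at h2 ⊢
      exact (hstep1 (c n) (hinv n).1 (hinv n).2).2.2.2.2 S hS h1 h2
  have hcard : ∀ n, c n ≠ Finset.univ → n ≤ (c n).card := by
    intro n
    induction n with
    | zero => intro _; exact Nat.zero_le _
    | succ k ih =>
      intro h
      have hk : c k ≠ Finset.univ := fun hh => h (by rw [hstay k hh]; exact hh)
      have h1 := Finset.card_lt_card (hgrow k hk)
      have h2 := ih hk
      omega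
  have hreach : ∃ n, c n = Finset.univ := by
    refine ⟨Fintype.card I + 1, ?_⟩
    by_contra h
    have h1 := hcard _ h
    have h2 : (c (Fintype.card I + 1)).card ≤ Fintype.card I := Finset.card_le_univ _
    omega
  set m := Nat.find hreach with hm
  have hcm : c m = Finset.univ := Nat.find_spec hreach
  have hafter : ∀ k, m ≤ k → c k = Finset.univ := by
    intro k hk
    induction k with
    | zero => exact Nat.le_zero.mp hk ▸ hcm
    | succ t ih =>
      rcases Nat.lt_or_ge m (t + 1) with h | h
      · have ht := ih (Nat.lt_succ_iff.mp h)
        rw [hstay t ht]; exact ht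
      · exact le_antisymm hk h ▸ hcm
  have hAreach : ∃ n, A ⊆ c n := ⟨m, hcm ▸ Finset.subset_univ A⟩
  set k0 := Nat.find hAreach with hk0
  have hk0A : c k0 = A := by
    rcases Nat.eq_zero_or_pos k0 with h | h
    · have hs : A ⊆ c k0 := Nat.find_spec hAreach
      rw [h, c0] at hs ⊢
      exact (Finset.subset_empty.mp hs).symm
    · obtain ⟨t, ht⟩ := Nat.exists_eq_succ_of_ne_zero (Nat.pos_iff_ne_zero.mp h)
      have hnt : ¬ A ⊆ c t := Nat.find_min hAreach (by omega)
      have hsub2 : c k0 ⊆ A := by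
        rw [ht, csucc t]
        exact (hstep1 (c t) (hinv t).1 (hinv t).2).2.2.2.1 hnt
      exact le_antisymm hsub2 (Nat.find_spec hAreach)
  -- blocks
  set B : ℕ → Finset I := fun k => c (k + 1) \ c k with hB
  have hKex : ∀ i : I, ∃ k, i ∈ c (k + 1) := by
    intro i
    refine ⟨m, ?_⟩
    rw [hafter (m + 1) (Nat.le_succ m)]
    exact Finset.mem_univ i
  set K : I → ℕ := fun i => Nat.find (hKex i) with hK
  have hK1 : ∀ i, i ∈ c (K i + 1) := fun i => Nat.find_spec (hKex i)
  have hK2 : ∀ i, i ∉ c (K i) := by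
    intro i
    cases hKi : K i with
    | zero => rw [c0]; exact Finset.notMem_empty i
    | succ t =>
      have hlt : t < K i := by omega
      exact Nat.find_min (hKex i) hlt
  have hiB : ∀ i, i ∈ B (K i) := fun i => Finset.mem_sdiff.mpr ⟨hK1 i, hK2 i⟩
  have hKmem : ∀ k, ∀ i ∈ B k, K i = k := by
    intro k i hi
    rw [hB] at hi
    obtain ⟨hi1, hi2⟩ := Finset.mem_sdiff.mp hi
    have hle : K i ≤ k := Nat.find_le hi1
    rcases lt_or_eq_of_le hle with h | h
    · exact absurd (hmono (show K i + 1 ≤ k by omega) (hK1 i)) hi2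
    · exact h
  set x : I → ℝ := fun i => (rz z (c (K i + 1)) - rz z (c (K i))) / (B (K i)).card with hx
  have hxB : ∀ k, ∀ i ∈ B k, x i = (rz z (c (k + 1)) - rz z (c k)) / (B k).card := by
    intro k i hi
    rw [hx]
    simp only [hKmem k i hi]
  have hBne : ∀ k, k < m → (B k).Nonempty := by
    intro k hk
    have hne : c k ≠ Finset.univ := Nat.find_min hreach hk
    rw [hB]
    exact Finset.sdiff_nonempty.mpr (fun hs => (hgrow k hne).2 hs)
  have hsumB : ∀ k, ∑ i ∈ B k, x i = rz z (c (k + 1)) - rz z (c k) := by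
    intro k
    by_cases hk : k < m
    · rw [Finset.sum_congr rfl (hxB k), Finset.sum_const, Finset.card_eq_sum_ones]
      have hcard0 : ((B k).card : ℝ) ≠ 0 := by
        have := (hBne k hk)
        simp [Finset.card_eq_zero, this.ne_empty]
      rw [← Finset.card_eq_sum_ones]
      rw [nsmul_eq_mul]
      field_simp
    · have h1 : c k = Finset.univ := hafter k (le_of_not_gt hk)
      have h2 : c (k + 1) = Finset.univ := hafter (k + 1) (by omega)
      have : B k = ∅ := by rw [hB]; simp [h1, h2]
      rw [this, h1, h2, Finset.sum_empty]
      ring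
  have hcup : ∀ k, c (k + 1) = c k ∪ B k := by
    intro k
    rw [hB]
    exact (Finset.union_sdiff_of_subset (hmono (Nat.le_succ k))).symm
  have hchain_val : ∀ k, ∑ i ∈ c k, x i = rz z (c k) := by
    intro k
    induction k with
    | zero => rw [c0, Finset.sum_empty, rz_empty hz0]
    | succ t ih =>
      have hs : ∑ i ∈ c (t + 1), x i = ∑ i ∈ c t, x i + ∑ i ∈ B t, x i := by
        rw [hcup t]
        exact Finset.sum_union Finset.disjoint_sdiff
      rw [hs, ih, hsumB t]
      ring
  have hdich : ∀ S, z S ≠ ⊤ → ∀ k, S ∩ B k = ∅ ∨ B k ⊆ S := by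
    intro S hS k
    have hU := lattice_step hsub hS (hinv k).1
    have hT := lattice_step hsub hU.1 (hinv (k + 1)).1
    have hsub1 : c k ⊆ (S ∪ c k) ∩ c (k + 1) :=
      Finset.subset_inter Finset.subset_union_right (hmono (Nat.le_succ k))
    have hsub2 : (S ∪ c k) ∩ c (k + 1) ⊆ c (k + 1) := Finset.inter_subset_right
    rcases hnob k _ hT.2.1 hsub1 hsub2 with h | h
    · left
      apply Finset.eq_empty_iff_forall_notMem.mpr
      intro i hi
      obtain ⟨hiS, hiB'⟩ := Finset.mem_inter.mp hi
      obtain ⟨hi1, hi2⟩ := Finset.mem_sdiff.mp hiB'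
      have hmem : i ∈ (S ∪ c k) ∩ c (k + 1) :=
        Finset.mem_inter.mpr ⟨Finset.mem_union_left _ hiS, hi1⟩
      rw [h] at hmem
      exact hi2 hmem
    · right
      intro i hi
      obtain ⟨hi1, hi2⟩ := Finset.mem_sdiff.mp hi
      have hmem : i ∈ (S ∪ c k) ∩ c (k + 1) := by rw [h]; exact hi1
      rcases Finset.mem_union.mp (Finset.mem_inter.mp hmem).1 with h' | h'
      · exact h'
      · exact absurd h' hi2
  have hmain : ∀ S, z S ≠ ⊤ → ∀ t, ∑ i ∈ S ∩ c t, x i ≤ rz z (S ∩ c t) := by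
    intro S hS t
    induction t with
    | zero =>
      rw [c0, Finset.inter_empty, Finset.sum_empty, rz_empty hz0]
    | succ t ih =>
      have hsplit : S ∩ c (t + 1) = (S ∩ c t) ∪ (S ∩ B t) := by
        rw [hcup t, Finset.inter_union_distrib_left]
      rcases hdich S hS t with h | h
      · rw [hsplit, h, Finset.union_empty]
        exact ih
      · have hSB : S ∩ B t = B t := Finset.inter_eq_right.mpr h
        have hdisj : Disjoint (S ∩ c t) (S ∩ B t) := by
          rw [hSB]
          exact Finset.disjoint_sdiff.mono_left Finset.inter_subset_right
        have hsum : ∑ i ∈ S ∩ c (t + 1), x i = ∑ i ∈ S ∩ c t, x i + (rz z (c (t + 1)) - rz z (c t)) := by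
          rw [hsplit, Finset.sum_union hdisj, hSB, hsumB t]
        -- submodular step
        have hX := lattice_step hsub hS (hinv (t + 1)).1
        have hlat := lattice_step hsub hX.2.1 (hinv t).1
        have hU : (S ∩ c (t + 1)) ∪ c t = c (t + 1) := by
          apply le_antisymm
          · exact Finset.union_subset Finset.inter_subset_right (hmono (Nat.le_succ t))
          · intro i hi
            by_cases hic : i ∈ c t
            · exact Finset.mem_union_right _ hic
            · have hib : i ∈ B t := Finset.mem_sdiff.mpr ⟨hi, hic⟩
              exact Finset.mem_union_left _ (Finset.mem_inter.mpr ⟨h hib, hi⟩)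
        have hI2 : (S ∩ c (t + 1)) ∩ c t = S ∩ c t := by
          rw [Finset.inter_assoc]
          congr 1
          exact Finset.inter_eq_right.mpr (hmono (Nat.le_succ t))
        have hkey := hlat.2.2
        rw [hU, hI2] at hkey
        linarith [hsum, ih]
  -- conclusion
  have hAval : ∑ i ∈ A, x i = rz z A := by rw [← hk0A]; exact hchain_val k0
  refine ⟨x, ⟨?_, ?_⟩, hAval⟩
  · have : ∑ i, x i = ∑ i ∈ c m, x i := by rw [hcm]
    rw [this, hchain_val m, hcm, coe_rz hzI]
  · intro S
    by_cases hS : z S = ⊤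
    · rw [hS]; exact le_top
    · have := hmain S hS m
      rw [hcm, Finset.inter_univ] at this
      rw [← coe_rz hS]
      exact_mod_cast this


/-- `S` is tight for `x`. -/
def TightSet (z : Finset I → WithTop ℝ) (x : I → ℝ) (S : Finset I) : Prop :=
  z S ≠ ⊤ ∧ ∑ i ∈ S, x i = rz z S

lemma tight_empty {z : Finset I → WithTop ℝ} (hz0 : z ∅ = 0) (x : I → ℝ) :
    TightSet z x ∅ := by
  refine ⟨by rw [hz0]; exact fun h => by simp at h, ?_⟩
  rw [Finset.sum_empty, rz_empty hz0]

lemma tight_univ {z : Finset I → WithTop ℝ} (hzI : z Finset.univ ≠ ⊤) {x : I → ℝ}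
    (hx : x ∈ EGP z) : TightSet z x Finset.univ := by
  refine ⟨hzI, ?_⟩
  have h := hx.1
  rw [← coe_rz hzI] at h
  exact_mod_cast h

lemma tight_union_inter {z : Finset I → WithTop ℝ} (hsub : Submodular z) {x : I → ℝ}
    (hx : x ∈ EGP z) {S T : Finset I} (hS : TightSet z x S) (hT : TightSet z x T) :
    TightSet z x (S ∪ T) ∧ TightSet z x (S ∩ T) := by
  obtain ⟨h1, h2, h3⟩ := lattice_step hsub hS.1 hT.1
  have hu : ∑ i ∈ S ∪ T, x i ≤ rz z (S ∪ T) := le_rz h1 (hx.2 _)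
  have hi : ∑ i ∈ S ∩ T, x i ≤ rz z (S ∩ T) := le_rz h2 (hx.2 _)
  have hsum : ∑ i ∈ S ∪ T, x i + ∑ i ∈ S ∩ T, x i = ∑ i ∈ S, x i + ∑ i ∈ T, x i :=
    Finset.sum_union_inter
  rw [hS.2, hT.2] at hsum
  exact ⟨⟨h1, by linarith⟩, ⟨h2, by linarith⟩⟩

lemma tight_inf {z : Finset I → WithTop ℝ} (hsub : Submodular z) {x : I → ℝ}
    (hx : x ∈ EGP z) (F : Finset (Finset I)) :
    F.Nonempty → (∀ S ∈ F, TightSet z x S) → TightSet z x (F.inf id) := by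
  classical
  induction F using Finset.induction_on with
  | empty => exact fun hne _ => absurd hne (by simp)
  | @insert S F hSF ih =>
    intro _ hF
    rw [Finset.inf_insert]
    have h1 : TightSet z x S := hF S (Finset.mem_insert_self S F)
    by_cases hFe : F = ∅
    · subst hFe; simpa using h1
    · have h2 : TightSet z x (F.inf id) :=
        ih (Finset.nonempty_of_ne_empty hFe) (fun T hT => hF T (Finset.mem_insert_of_mem hT))
      exact (tight_union_inter hsub hx h1 h2).2

lemma tight_sup {z : Finset I → WithTop ℝ} (hz0 : z ∅ = 0) (hsub : Submodular z) {x : I → ℝ}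
    (hx : x ∈ EGP z) (F : Finset (Finset I)) :
    (∀ S ∈ F, TightSet z x S) → TightSet z x (F.sup id) := by
  classical
  induction F using Finset.induction_on with
  | empty => intro _; simpa using tight_empty hz0 x
  | @insert S F hSF ih =>
    intro hF
    rw [Finset.sup_insert]
    have h1 : TightSet z x S := hF S (Finset.mem_insert_self S F)
    have h2 : TightSet z x (F.sup id) := ih (fun T hT => hF T (Finset.mem_insert_of_mem hT))
    exact (tight_union_inter hsub hx h1 h2).1

lemma perturb {z : Finset I → WithTop ℝ} {x : I → ℝ} (hx : x ∈ EGP z) {i j : I}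
    (hij : i ≠ j)
    (hmin : ∀ S : Finset I, TightSet z x S → j ∈ S → i ∈ S) :
    ∃ ε > (0:ℝ), (fun t => x t + (if t = j then ε else 0) - (if t = i then ε else 0)) ∈ EGP z := by
  classical
  set SL := Finset.univ.powerset.filter
    (fun S : Finset I => z S ≠ ⊤ ∧ j ∈ S ∧ i ∉ S) with hSL
  have hslack : ∀ S ∈ SL, 0 < rz z S - ∑ t ∈ S, x t := by
    intro S hS
    rw [hSL, Finset.mem_filter] at hS
    obtain ⟨-, hSne, hjS, hiS⟩ := hS
    have hle : ∑ t ∈ S, x t ≤ rz z S := le_rz hSne (hx.2 S)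
    rcases lt_or_eq_of_le hle with h | h
    · linarith
    · exact absurd (hmin S ⟨hSne, h⟩ hjS) hiS
  set ε : ℝ := if hne : SL.Nonempty then
      (SL.image (fun S => rz z S - ∑ t ∈ S, x t)).min'
        (hne.image _) else 1 with hε
  have hεpos : 0 < ε := by
    rw [hε]
    split_ifs with hne
    · obtain ⟨S, hS, hSeq⟩ := Finset.mem_image.mp
        ((SL.image (fun S => rz z S - ∑ t ∈ S, x t)).min'_mem (hne.image _))
      rw [← hSeq]
      exact hslack S hS
    · exact one_pos
  have hεle : ∀ S ∈ SL, ε ≤ rz z S - ∑ t ∈ S, x t := by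
    intro S hS
    rw [hε]
    have hne : SL.Nonempty := ⟨S, hS⟩
    rw [dif_pos hne]
    exact Finset.min'_le _ _ (Finset.mem_image_of_mem _ hS)
  set x' : I → ℝ := fun t => x t + (if t = j then ε else 0) - (if t = i then ε else 0) with hx'
  have hsum : ∀ S : Finset I, ∑ t ∈ S, x' t =
      ∑ t ∈ S, x t + (if j ∈ S then ε else 0) - (if i ∈ S then ε else 0) := by
    intro S
    rw [hx']
    rw [Finset.sum_sub_distrib, Finset.sum_add_distrib, Finset.sum_ite_eq' S j (fun _ => ε),
      Finset.sum_ite_eq' S i (fun _ => ε)]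
  refine ⟨ε, hεpos, ?_, ?_⟩
  · rw [hsum Finset.univ]
    simp only [Finset.mem_univ, if_true]
    have : ∑ t, x t + ε - ε = ∑ t, x t := by ring
    rw [this]
    exact hx.1
  · intro S
    by_cases hSne : z S = ⊤
    · rw [hSne]; exact le_top
    · rw [← coe_rz hSne, WithTop.coe_le_coe, hsum S]
      have hbase : ∑ t ∈ S, x t ≤ rz z S := le_rz hSne (hx.2 S)
      by_cases hjS : j ∈ S
      · by_cases hiS : i ∈ S
        · simp only [hjS, hiS, if_true]
          linarith
        · have hmem : S ∈ SL := by
            rw [hSL, Finset.mem_filter]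
            exact ⟨Finset.mem_powerset.mpr (Finset.subset_univ S), hSne, hjS, hiS⟩
          have := hεle S hmem
          simp only [hjS, hiS, if_true, if_false]
          linarith
      · simp only [hjS, if_false]
        split_ifs with hiS
        · linarith
        · linarith

lemma tight_all_compl {z : Finset I → WithTop ℝ} (hz0 : z ∅ = 0)
    (hzI : z Finset.univ ≠ ⊤) (hsub : Submodular z) {A : Finset I} (hA : z A ≠ ⊤)
    (htight : ∀ x ∈ EGP z, ((∑ i ∈ A, x i : ℝ) : WithTop ℝ) = z A) :
    z (Finset.univ \ A) ≠ ⊤ ∧ z A + z (Finset.univ \ A) = z Finset.univ := by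
  classical
  obtain ⟨x, hx, -⟩ := greedy_exists hz0 hzI hsub A hA
  set D : I → Finset I := fun j =>
    Finset.univ.filter (fun i => ∀ S : Finset I, TightSet z x S → j ∈ S → i ∈ S) with hD
  have hDmem : ∀ j i, i ∈ D j ↔ ∀ S : Finset I, TightSet z x S → j ∈ S → i ∈ S := by
    intro j i
    rw [hD]
    simp
  have hDtight : ∀ j, TightSet z x (D j) := by
    intro j
    set F := Finset.univ.powerset.filter (fun S => TightSet z x S ∧ j ∈ S) with hF
    have hFne : F.Nonempty := by
      refine ⟨Finset.univ, ?_⟩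
      rw [hF, Finset.mem_filter]
      exact ⟨Finset.mem_powerset.mpr (Finset.subset_univ _), tight_univ hzI hx,
        Finset.mem_univ j⟩
    have hDF : D j = F.inf id := by
      apply le_antisymm
      · apply Finset.le_inf
        intro S hS
        rw [hF, Finset.mem_filter] at hS
        intro i hi
        exact (hDmem j i).mp hi S hS.2.1 hS.2.2
      · intro i hi
        rw [hDmem]
        intro S hS hjS
        have hSF : S ∈ F := by
          rw [hF, Finset.mem_filter]
          exact ⟨Finset.mem_powerset.mpr (Finset.subset_univ _), hS, hjS⟩
        have hle : F.inf id ≤ id S := Finset.inf_le hSF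
        exact hle hi
    rw [hDF]
    exact tight_inf hsub hx F hFne (fun S hS => ((Finset.mem_filter.mp hS).2).1)
  have hxA : ∑ i ∈ A, x i = rz z A := by
    have h := htight x hx
    rw [← coe_rz hA] at h
    exact_mod_cast h
  by_cases hcase : ∃ j ∈ Finset.univ \ A, (D j ∩ A).Nonempty
  · exfalso
    obtain ⟨j, hj, i, hi⟩ := hcase
    have hjA : j ∉ A := (Finset.mem_sdiff.mp hj).2
    obtain ⟨hiD, hiA⟩ := Finset.mem_inter.mp hi
    have hij : i ≠ j := fun h => hjA (h ▸ hiA)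
    obtain ⟨ε, hε, hx'⟩ := perturb hx hij (fun S hS hjS => (hDmem j i).mp hiD S hS hjS)
    have h2 := htight _ hx'
    have hsumA : ∑ t ∈ A, (x t + (if t = j then ε else 0) - (if t = i then ε else 0)) =
        ∑ t ∈ A, x t - ε := by
      rw [Finset.sum_sub_distrib, Finset.sum_add_distrib,
        Finset.sum_ite_eq' A j (fun _ => ε), Finset.sum_ite_eq' A i (fun _ => ε),
        if_neg hjA, if_pos hiA]
      ring
    rw [hsumA, ← coe_rz hA, WithTop.coe_eq_coe] at h2
    rw [hxA] at h2
    linarith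
  · push_neg at hcase
    have hDsub : ∀ j ∈ Finset.univ \ A, D j ⊆ Finset.univ \ A := by
      intro j hj i hi
      rw [Finset.mem_sdiff]
      refine ⟨Finset.mem_univ i, fun hiA => ?_⟩
      have := hcase j hj
      exact Finset.notMem_empty i (this ▸ Finset.mem_inter.mpr ⟨hi, hiA⟩)
    set F := (Finset.univ \ A).image D with hF
    have hsupeq : F.sup id = Finset.univ \ A := by
      apply le_antisymm
      · apply Finset.sup_le
        intro S hS
        obtain ⟨j, hj, rfl⟩ := Finset.mem_image.mp hS
        exact hDsub j hj
      · intro j hj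
        have hjD : j ∈ D j := (hDmem j j).mpr (fun S _ h => h)
        have hDF : D j ∈ F := Finset.mem_image_of_mem D hj
        exact (Finset.le_sup hDF : id (D j) ⊆ F.sup id) hjD
    have htightc : TightSet z x (Finset.univ \ A) := by
      rw [← hsupeq]
      apply tight_sup hz0 hsub hx
      intro S hS
      obtain ⟨j, hj, rfl⟩ := Finset.mem_image.mp hS
      exact hDtight j
    refine ⟨htightc.1, ?_⟩
    have hsplit : ∑ i ∈ A, x i + ∑ i ∈ Finset.univ \ A, x i = ∑ i, x i := by
      rw [← Finset.sum_union (Finset.disjoint_sdiff), Finset.union_sdiff_of_subset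
        (Finset.subset_univ A)]
    rw [← coe_rz hA, ← coe_rz htightc.1, ← hxA, ← htightc.2, ← WithTop.coe_add, hsplit]
    exact hx.1
lemma split_of_compl {z : Finset I → WithTop ℝ} (hz0 : z ∅ = 0)
    (hzI : z Finset.univ ≠ ⊤) (hsub : Submodular z) {A : Finset I}
    (hadd : z A + z (Finset.univ \ A) = z Finset.univ) (E : Finset I) :
    z E = z (E ∩ A) + z (E \ A) := by
  classical
  have hEA : (E ∩ A) ∪ (E \ A) = E := by
    ext i
    simp only [Finset.mem_union, Finset.mem_inter, Finset.mem_sdiff]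
    tauto
  have hEA2 : (E ∩ A) ∩ (E \ A) = ∅ := by
    ext i
    simp only [Finset.mem_inter, Finset.mem_sdiff, Finset.notMem_empty, iff_false]
    tauto
  apply le_antisymm
  · have h := hsub (E ∩ A) (E \ A)
    rw [hEA, hEA2, hz0, add_zero] at h
    exact h
  · have h1 := hsub E A
    have h2 := hsub (E ∪ A) (Finset.univ \ A)
    have he1 : (E ∪ A) ∪ (Finset.univ \ A) = Finset.univ := by
      ext i
      simp only [Finset.mem_union, Finset.mem_sdiff, Finset.mem_univ, iff_true]
      tauto
    have he2 : (E ∪ A) ∩ (Finset.univ \ A) = E \ A := by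
      ext i
      simp only [Finset.mem_inter, Finset.mem_union, Finset.mem_sdiff, Finset.mem_univ,
        true_and]
      tauto
    rw [he1, he2] at h2
    have key : z (E ∩ A) + z (E \ A) + z Finset.univ ≤ z E + z Finset.univ := by
      calc z (E ∩ A) + z (E \ A) + z Finset.univ
          = z (E ∩ A) + (z Finset.univ + z (E \ A)) := by abel
        _ ≤ z (E ∩ A) + (z (E ∪ A) + z (Finset.univ \ A)) := add_le_add le_rfl h2
        _ = (z (E ∪ A) + z (E ∩ A)) + z (Finset.univ \ A) := by abel
        _ ≤ (z E + z A) + z (Finset.univ \ A) := add_le_add h1 le_rfl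
        _ = z E + z Finset.univ := by rw [add_assoc, hadd]
    exact (WithTop.add_le_add_iff_right hzI).mp key

end CtopHelpers
/-- The family of `A ⊆ I` with `x_A = z(A)` for every `x ∈ Π(z)` is a
topology on `I`, equal to the totally disconnected topology `ctop(z)` whose open sets are
the unions of the parts of the indecomposable factorization of `z`. In particular, if `z`
is indecomposable, then for every `A` with `∅ ≠ A ≠ I` and `z(A) < ∞`, the set
`{x ∈ Π(z) : x_A = z(A)}` is a proper nonempty (exposed) face of `Π(z)`. -/
theorem equality_sets_form_ctop
    {I : Type*} [Fintype I] [DecidableEq I]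
    (z : Finset I → WithTop ℝ) (hz0 : z ∅ = 0) (hzI : z Finset.univ ≠ ⊤)
    (hsub : Submodular z)
    (fam : Finset (Finset I)) (hfam : IsIndecompFactorization z fam) :
    IsTopologyFam {A : Finset I | ∀ x ∈ EGP z, ((∑ i ∈ A, x i : ℝ) : WithTop ℝ) = z A} ∧
    {A : Finset I | ∀ x ∈ EGP z, ((∑ i ∈ A, x i : ℝ) : WithTop ℝ) = z A} =
      {A : Finset I | ∀ B ∈ fam, B ⊆ A ∨ Disjoint B A} ∧
    (IndecompOn z Finset.univ →
      ∀ A : Finset I, A.Nonempty → A ≠ Finset.univ → z A ≠ ⊤ →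
        ({x ∈ EGP z | ((∑ i ∈ A, x i : ℝ) : WithTop ℝ) = z A}).Nonempty ∧
        {x ∈ EGP z | ((∑ i ∈ A, x i : ℝ) : WithTop ℝ) = z A} ≠ EGP z ∧
        IsExposed ℝ (EGP z) {x ∈ EGP z | ((∑ i ∈ A, x i : ℝ) : WithTop ℝ) = z A}) := by
  classical
  obtain ⟨hfne, hfdisj, hfsup, hfsum, hfind⟩ := hfam
  -- Direction ⊇ of part 2
  have hC1 : ∀ A : Finset I, (∀ B ∈ fam, B ⊆ A ∨ Disjoint B A) →
      z A ≠ ⊤ ∧ z (Finset.univ \ A) ≠ ⊤ ∧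
        ∀ x ∈ EGP z, ((∑ i ∈ A, x i : ℝ) : WithTop ℝ) = z A := by
    intro A hall
    have hadd : z A + z (Finset.univ \ A) = z Finset.univ := by
      rw [hfsum A, hfsum (Finset.univ \ A), hfsum Finset.univ, ← Finset.sum_add_distrib]
      apply Finset.sum_congr rfl
      intro B hB
      rcases hall B hB with h | h
      · have h1 : A ∩ B = B := Finset.inter_eq_right.mpr h
        have h2 : (Finset.univ \ A) ∩ B = ∅ := by
          ext i
          simp only [Finset.mem_inter, Finset.mem_sdiff, Finset.mem_univ, true_and,
            Finset.notMem_empty, iff_false]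
          exact fun ⟨hna, hb⟩ => hna (h hb)
        rw [h1, h2, hz0, add_zero, Finset.univ_inter]
      · have h1 : A ∩ B = ∅ := by
          ext i
          simp only [Finset.mem_inter, Finset.notMem_empty, iff_false]
          exact fun ⟨ha, hb⟩ => (Finset.disjoint_left.mp h) hb ha
        have h2 : (Finset.univ \ A) ∩ B = B := by
          ext i
          simp only [Finset.mem_inter, Finset.mem_sdiff, Finset.mem_univ, true_and]
          exact ⟨fun ⟨_, hb⟩ => hb, fun hb => ⟨fun ha => (Finset.disjoint_left.mp h) hb ha, hb⟩⟩
        rw [h1, h2, hz0, zero_add, Finset.univ_inter]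
    have hfin := WithTop.add_ne_top.mp (hadd ▸ hzI)
    refine ⟨hfin.1, hfin.2, ?_⟩
    intro x hx
    have h1 : ∑ i ∈ A, x i ≤ rz z A := le_rz hfin.1 (hx.2 A)
    have h2 : ∑ i ∈ Finset.univ \ A, x i ≤ rz z (Finset.univ \ A) :=
      le_rz hfin.2 (hx.2 _)
    have h3 : ∑ i ∈ A, x i + ∑ i ∈ Finset.univ \ A, x i = rz z Finset.univ := by
      rw [← Finset.sum_union Finset.disjoint_sdiff,
        Finset.union_sdiff_of_subset (Finset.subset_univ A)]
      have := hx.1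
      rw [← coe_rz hzI] at this
      exact_mod_cast this
    have h4 : rz z A + rz z (Finset.univ \ A) = rz z Finset.univ := by
      have : ((rz z A + rz z (Finset.univ \ A) : ℝ) : WithTop ℝ) =
          ((rz z Finset.univ : ℝ) : WithTop ℝ) := by
        rw [WithTop.coe_add, coe_rz hfin.1, coe_rz hfin.2, coe_rz hzI, hadd]
      exact_mod_cast this
    have : ∑ i ∈ A, x i = rz z A := by linarith
    rw [this, coe_rz hfin.1]
  -- EGP is nonempty
  have hOempty : z (∅ : Finset I) ≠ ⊤ := by rw [hz0]; exact fun h => by simp at h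
  obtain ⟨x₀, hx₀, -⟩ := greedy_exists hz0 hzI hsub ∅ hOempty
  -- Direction ⊆ of part 2
  have hC2 : ∀ A : Finset I, (∀ x ∈ EGP z, ((∑ i ∈ A, x i : ℝ) : WithTop ℝ) = z A) →
      ∀ B ∈ fam, B ⊆ A ∨ Disjoint B A := by
    intro A htight B hB
    have hA : z A ≠ ⊤ := by rw [← htight x₀ hx₀]; exact WithTop.coe_ne_top
    obtain ⟨hAc, hadd⟩ := tight_all_compl hz0 hzI hsub hA htight
    have hsplitE := split_of_compl hz0 hzI hsub hadd
    by_contra hcon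
    push_neg at hcon
    obtain ⟨hBA, hBd⟩ := hcon
    obtain ⟨a, haB, haA⟩ := Finset.not_disjoint_iff.mp hBd
    obtain ⟨b, hbB, hbA⟩ := Finset.not_subset.mp hBA
    refine hfind B hB (B ∩ A) (B \ A) ⟨a, Finset.mem_inter.mpr ⟨haB, haA⟩⟩
      ⟨b, Finset.mem_sdiff.mpr ⟨hbB, hbA⟩⟩ ⟨?_, ?_, ?_⟩
    · exact (Finset.disjoint_sdiff : Disjoint A (B \ A)).mono_left Finset.inter_subset_right
    · ext i
      simp only [Finset.mem_union, Finset.mem_inter, Finset.mem_sdiff]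
      tauto
    · intro E hEB
      have h1 : E ∩ (B ∩ A) = E ∩ A := by
        ext i
        simp only [Finset.mem_inter]
        exact ⟨fun ⟨he, _, ha⟩ => ⟨he, ha⟩, fun ⟨he, ha⟩ => ⟨he, hEB he, ha⟩⟩
      have h2 : E ∩ (B \ A) = E \ A := by
        ext i
        simp only [Finset.mem_inter, Finset.mem_sdiff]
        exact ⟨fun ⟨he, _, ha⟩ => ⟨he, ha⟩, fun ⟨he, ha⟩ => ⟨he, hEB he, ha⟩⟩
      rw [h1, h2]
      exact hsplitE E
  refine ⟨⟨?_, ?_, ?_, ?_⟩, ?_, ?_⟩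
  · -- ∅ in family
    intro x _
    rw [Finset.sum_empty, hz0]
    rfl
  · -- univ in family
    exact fun x hx => hx.1
  · -- union
    intro A hA B hB x hx
    have hzA : z A ≠ ⊤ := by rw [← hA x hx]; exact WithTop.coe_ne_top
    have hzB : z B ≠ ⊤ := by rw [← hB x hx]; exact WithTop.coe_ne_top
    have htA : TightSet z x A := ⟨hzA, by
      have := hA x hx; rw [← coe_rz hzA] at this; exact_mod_cast this⟩
    have htB : TightSet z x B := ⟨hzB, by
      have := hB x hx; rw [← coe_rz hzB] at this; exact_mod_cast this⟩
    have h := (tight_union_inter hsub hx htA htB).1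
    rw [h.2, coe_rz h.1]
  · -- intersection
    intro A hA B hB x hx
    have hzA : z A ≠ ⊤ := by rw [← hA x hx]; exact WithTop.coe_ne_top
    have hzB : z B ≠ ⊤ := by rw [← hB x hx]; exact WithTop.coe_ne_top
    have htA : TightSet z x A := ⟨hzA, by
      have := hA x hx; rw [← coe_rz hzA] at this; exact_mod_cast this⟩
    have htB : TightSet z x B := ⟨hzB, by
      have := hB x hx; rw [← coe_rz hzB] at this; exact_mod_cast this⟩
    have h := (tight_union_inter hsub hx htA htB).2
    rw [h.2, coe_rz h.1]
  · -- part 2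
    ext A
    simp only [Set.mem_setOf_eq]
    exact ⟨fun h => hC2 A h, fun h => (hC1 A h).2.2⟩
  · -- part 3
    intro hind A hAne hAuniv hA
    obtain ⟨a₀, ha₀⟩ := hAne
    have hIuniv : (Finset.univ : Finset I).Nonempty := ⟨a₀, Finset.mem_univ a₀⟩
    have hfamne : fam.Nonempty := by
      rcases Finset.eq_empty_or_nonempty fam with h | h
      · rw [h] at hfsup
        simp at hfsup
        exact absurd hfsup.symm hIuniv.ne_empty
      · exact h
    obtain ⟨B₀, hB₀⟩ := hfamne
    have hB₀univ : B₀ = Finset.univ := by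
      by_contra hne
      have hB₀sub : B₀ ⊆ Finset.univ := Finset.subset_univ B₀
      have hcne : (Finset.univ \ B₀).Nonempty := by
        rw [Finset.sdiff_nonempty]
        exact fun h => hne (le_antisymm hB₀sub h)
      refine hind B₀ (Finset.univ \ B₀) (hfne B₀ hB₀) hcne ⟨Finset.disjoint_sdiff, ?_, ?_⟩
      · exact Finset.union_sdiff_of_subset hB₀sub
      · intro E _
        rw [hfsum E, hfsum (E ∩ B₀), hfsum (E ∩ (Finset.univ \ B₀)), ← Finset.sum_add_distrib]
        apply Finset.sum_congr rfl
        intro B hB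
        by_cases hBB : B = B₀
        · subst hBB
          have h1 : E ∩ B ∩ B = E ∩ B := by rw [Finset.inter_assoc, Finset.inter_self]
          have h2 : E ∩ (Finset.univ \ B) ∩ B = ∅ := by
            ext i
            simp only [Finset.mem_inter, Finset.mem_sdiff, Finset.mem_univ, true_and,
              Finset.notMem_empty, iff_false]
            tauto
          rw [h1, h2, hz0, add_zero]
        · have hdisj := hfdisj B hB B₀ hB₀ hBB
          have h1 : E ∩ B₀ ∩ B = ∅ := by
            ext i
            simp only [Finset.mem_inter, Finset.notMem_empty, iff_false]
            exact fun ⟨⟨_, h0⟩, hb⟩ => (Finset.disjoint_left.mp hdisj) hb h0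
          have h2 : E ∩ (Finset.univ \ B₀) ∩ B = E ∩ B := by
            ext i
            simp only [Finset.mem_inter, Finset.mem_sdiff, Finset.mem_univ, true_and]
            exact ⟨fun ⟨⟨he, _⟩, hb⟩ => ⟨he, hb⟩,
              fun ⟨he, hb⟩ => ⟨⟨he, fun h0 => (Finset.disjoint_left.mp hdisj) hb h0⟩, hb⟩⟩
          rw [h1, h2, hz0, zero_add]
    have hnotall : ¬ ∀ x ∈ EGP z, ((∑ i ∈ A, x i : ℝ) : WithTop ℝ) = z A := by
      intro h
      rcases hC2 A h B₀ hB₀ with hsub' | hdisj'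
      · rw [hB₀univ] at hsub'
        exact hAuniv (le_antisymm (Finset.subset_univ A) hsub')
      · rw [hB₀univ] at hdisj'
        have := Finset.disjoint_left.mp hdisj' (Finset.mem_univ a₀) ha₀
        exact this
    obtain ⟨y₀, hy₀, hy₀A⟩ := greedy_exists hz0 hzI hsub A hA
    refine ⟨⟨y₀, hy₀, by rw [hy₀A]; exact coe_rz hA⟩, ?_, ?_⟩
    · intro heq
      apply hnotall
      intro x hx
      have : x ∈ {x ∈ EGP z | ((∑ i ∈ A, x i : ℝ) : WithTop ℝ) = z A} := heq.symm ▸ hx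
      exact this.2
    · intro _
      set l₀ : (I → ℝ) →ₗ[ℝ] ℝ := ∑ i ∈ A, LinearMap.proj i with hl₀
      have hl₀app : ∀ y : I → ℝ, l₀ y = ∑ i ∈ A, y i := by
        intro y
        rw [hl₀, LinearMap.coe_sum, Finset.sum_apply]
        rfl
      refine ⟨LinearMap.toContinuousLinearMap l₀, ?_⟩
      ext x
      simp only [Set.mem_setOf_eq, LinearMap.coe_toContinuousLinearMap']
      constructor
      · rintro ⟨hx, hxA⟩
        refine ⟨hx, ?_⟩
        intro y hy
        rw [hl₀app, hl₀app]
        have h1 : ∑ i ∈ A, y i ≤ rz z A := le_rz hA (hy.2 A)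
        have h2 : ∑ i ∈ A, x i = rz z A := by
          rw [← coe_rz hA] at hxA
          exact_mod_cast hxA
        linarith
      · rintro ⟨hx, hmax⟩
        refine ⟨hx, ?_⟩
        have h1 := hmax y₀ hy₀
        rw [hl₀app, hl₀app, hy₀A] at h1
        have h2 : ∑ i ∈ A, x i ≤ rz z A := le_rz hA (hx.2 A)
        have : ∑ i ∈ A, x i = rz z A := le_antisymm h2 h1
        rw [this, coe_rz hA]
end

section
/- Let z be a submodular function on the finite set I and let z = z₁ ⋯ z_r be its unique factorization into indecomposable factors supported on the partition I = I₁ ⊔ ⋯ ⊔ I_r. Then the dimension of Π(z) equals |I| − r. In particular, if z is indecomposable then dim Π(z) = |I| − 1, and there exists x ∈ Π(z) with x_A < z(A) for every A with ∅ ≠ A ≠ I and z(A) < ∞. -/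
open scoped Classical

namespace EGPAux
open Finset

set_option linter.unusedSectionVars false

variable {I : Type*} [Fintype I] [DecidableEq I]

/-- Real value of `z`. -/
noncomputable def zR (z : Finset I → WithTop ℝ) (S : Finset I) : ℝ := (z S).untopD 0

lemma coe_zR {z : Finset I → WithTop ℝ} {S : Finset I} (h : z S ≠ ⊤) :
    z S = ((zR z S : ℝ) : WithTop ℝ) := by
  obtain ⟨r, hr⟩ := WithTop.ne_top_iff_exists.mp h
  rw [← hr]; simp [zR, ← hr]

variable {z : Finset I → WithTop ℝ}

lemma zR_empty (hz0 : z ∅ = 0) : zR z ∅ = 0 := by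
  simp [zR, hz0]

lemma mem_EGP_iff (hzI : z Finset.univ ≠ ⊤) {x : I → ℝ} :
    x ∈ EGP z ↔ (∑ i, x i) = zR z Finset.univ ∧
      ∀ S : Finset I, z S ≠ ⊤ → ∑ i ∈ S, x i ≤ zR z S := by
  constructor
  · rintro ⟨h1, h2⟩
    refine ⟨?_, fun S hS => ?_⟩
    · rw [coe_zR hzI] at h1; exact_mod_cast h1
    · have := h2 S; rw [coe_zR hS] at this; exact_mod_cast this
  · rintro ⟨h1, h2⟩
    refine ⟨by rw [coe_zR hzI]; exact_mod_cast h1, fun S => ?_⟩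
    by_cases hS : z S = ⊤
    · simp [hS]
    · rw [coe_zR hS]; exact_mod_cast h2 S hS

lemma subR (hsub : Submodular z) {S T : Finset I} (hS : z S ≠ ⊤) (hT : z T ≠ ⊤) :
    z (S ∪ T) ≠ ⊤ ∧ z (S ∩ T) ≠ ⊤ ∧
      zR z (S ∪ T) + zR z (S ∩ T) ≤ zR z S + zR z T := by
  have h := hsub S T
  rw [coe_zR hS, coe_zR hT, ← WithTop.coe_add] at h
  have hu : z (S ∪ T) ≠ ⊤ := by
    intro h'; rw [h', top_add] at h; exact (WithTop.not_top_le_coe _) h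
  have hi : z (S ∩ T) ≠ ⊤ := by
    intro h'; rw [h', add_top] at h; exact (WithTop.not_top_le_coe _) h
  rw [coe_zR hu, coe_zR hi, ← WithTop.coe_add] at h
  exact ⟨hu, hi, WithTop.coe_le_coe.mp h⟩

lemma sup_ne_top (hz0 : z ∅ = 0) (hsub : Submodular z) {α : Type*} {s : Finset α}
    {f : α → Finset I} (h : ∀ a ∈ s, z (f a) ≠ ⊤) : z (s.sup f) ≠ ⊤ := by
  induction s using Finset.induction_on with
  | empty => simp only [Finset.sup_empty, Finset.bot_eq_empty, hz0]; exact (by simp : (0 : WithTop ℝ) ≠ ⊤)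
  | @insert a s ha ih =>
    rw [Finset.sup_insert]
    have h1 : z (f a) ≠ ⊤ := h a (mem_insert_self a s)
    have h2 : z (s.sup f) ≠ ⊤ := ih (fun b hb => h b (mem_insert_of_mem hb))
    exact (subR hsub h1 h2).1

/-- Greedy construction between two finite-value sets `C ⊆ D`. -/
lemma greedy_aux (hsub : Submodular z) :
    ∀ n : ℕ, ∀ C D : Finset I, z C ≠ ⊤ → z D ≠ ⊤ → C ⊆ D → (D \ C).card ≤ n →
    ∃ x : I → ℝ, (∀ i, i ∉ D \ C → x i = 0) ∧
      (∑ i, x i) = zR z D - zR z C ∧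
      ∀ S : Finset I, z S ≠ ⊤ → C ⊆ S → S ⊆ D → ∑ i ∈ S, x i ≤ zR z S - zR z C := by
  have base : ∀ C : Finset I, ∃ x : I → ℝ, (∀ i, i ∉ C \ C → x i = 0) ∧
      (∑ i, x i) = zR z C - zR z C ∧
      ∀ S : Finset I, z S ≠ ⊤ → C ⊆ S → S ⊆ C → ∑ i ∈ S, x i ≤ zR z S - zR z C := by
    intro C
    refine ⟨0, fun i _ => rfl, by simp, fun S hS h1 h2 => ?_⟩
    have : S = C := subset_antisymm h2 h1
    subst this; simp
  intro n
  induction n with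
  | zero =>
    intro C D hC hD hCD hcard
    have hDC : D = C := by
      have hemp : D \ C = ∅ := Finset.card_eq_zero.mp (Nat.le_zero.mp hcard)
      apply subset_antisymm _ hCD
      intro i hi
      by_contra hic
      have h' : i ∈ D \ C := Finset.mem_sdiff.mpr ⟨hi, hic⟩
      rw [hemp] at h'
      exact absurd h' (Finset.notMem_empty i)
    subst hDC; exact base D
  | succ n ih =>
    intro C D hC hD hCD hcard
    by_cases heq : D = C
    · subst heq; exact base D
    -- choose a maximal proper finite-value set M between C and D
    set cand : Finset (Finset I) :=
      (Finset.univ : Finset (Finset I)).filter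
        (fun M => z M ≠ ⊤ ∧ C ⊆ M ∧ M ⊆ D ∧ M ≠ D) with hcand
    have hCc : C ∈ cand := by
      simp only [hcand, mem_filter, mem_univ, true_and]
      exact ⟨hC, subset_rfl, hCD, fun h => heq h.symm⟩
    obtain ⟨M, hMc, hmax⟩ := Finset.exists_max_image cand Finset.card ⟨C, hCc⟩
    simp only [hcand, mem_filter, mem_univ, true_and] at hMc
    obtain ⟨hMfin, hCM, hMD, hMne⟩ := hMc
    obtain ⟨d, hdD, hdM⟩ := Finset.exists_of_ssubset (ssubset_of_subset_of_ne hMD hMne)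
    have hdC : d ∉ C := fun h => hdM (hCM h)
    -- apply induction hypothesis to (C, M)
    have hlt : (M \ C).card ≤ n := by
      have hss : M \ C ⊂ D \ C := by
        refine Finset.ssubset_iff_of_subset (Finset.sdiff_subset_sdiff hMD subset_rfl) |>.mpr ?_
        exact ⟨d, Finset.mem_sdiff.mpr ⟨hdD, hdC⟩, fun h => hdM (Finset.mem_sdiff.mp h).1⟩
      have := Finset.card_lt_card hss
      omega
    obtain ⟨x₁, hsupp₁, htot₁, hcon₁⟩ := ih C M hC hMfin hCM hlt
    set x : I → ℝ := fun i => x₁ i + (if i = d then zR z D - zR z M else 0) with hx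
    have hxS : ∀ S : Finset I, ∑ i ∈ S, x i =
        (∑ i ∈ S, x₁ i) + (if d ∈ S then zR z D - zR z M else 0) := by
      intro S
      simp only [hx, Finset.sum_add_distrib]
      rw [Finset.sum_ite_eq' S d (fun _ => zR z D - zR z M)]
    refine ⟨x, ?_, ?_, ?_⟩
    · intro i hi
      have hi1 : i ∉ M \ C := fun h =>
        hi (Finset.mem_sdiff.mpr ⟨hMD (Finset.mem_sdiff.mp h).1, (Finset.mem_sdiff.mp h).2⟩)
      have hid : i ≠ d := by
        rintro rfl; exact hi (Finset.mem_sdiff.mpr ⟨hdD, hdC⟩)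
      simp [hx, hsupp₁ i hi1, hid]
    · have htot : (∑ i, x i) = (∑ i, x₁ i) + (zR z D - zR z M) := by
        rw [hxS Finset.univ]; simp
      rw [htot, htot₁]; ring
    · intro S hS hCS hSD
      by_cases hSD' : S = D
      · rw [hSD']
        have hsum : ∑ i ∈ D, x i = ∑ i, x i := by
          apply Finset.sum_subset (Finset.subset_univ D)
          intro i _ hiS
          have hnot : i ∉ D \ C := fun h => hiS (Finset.mem_sdiff.mp h).1
          have hi1 : i ∉ M \ C := fun h => hnot
            (Finset.mem_sdiff.mpr ⟨hMD (Finset.mem_sdiff.mp h).1, (Finset.mem_sdiff.mp h).2⟩)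
          have hid : i ≠ d := by rintro rfl; exact hnot (Finset.mem_sdiff.mpr ⟨hdD, hdC⟩)
          simp [hx, hsupp₁ i hi1, hid]
        have htot : (∑ i, x i) = (∑ i, x₁ i) + (zR z D - zR z M) := by
          rw [hxS Finset.univ]; simp
        rw [hsum, htot, htot₁]; ring_nf; linarith
      by_cases hSM : S ⊆ M
      · have hdS : d ∉ S := fun h => hdM (hSM h)
        rw [hxS S, if_neg hdS, add_zero]
        exact hcon₁ S hS hCS hSM
      · -- S ∪ M must be D
        have hSM' : S ∪ M = D := by
          by_contra hne
          have hfin : z (S ∪ M) ≠ ⊤ := (subR hsub hS hMfin).1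
          have hmem : S ∪ M ∈ cand := by
            simp only [hcand, mem_filter, mem_univ, true_and]
            exact ⟨hfin, hCS.trans subset_union_left, union_subset hSD hMD, hne⟩
          have hcardle := hmax _ hmem
          have heqM : M = S ∪ M :=
            Finset.eq_of_subset_of_card_le subset_union_right hcardle
          exact hSM (by rw [heqM]; exact subset_union_left)
        have hdS : d ∈ S := by
          have : d ∈ S ∪ M := hSM' ▸ hdD
          rcases Finset.mem_union.mp this with h | h
          · exact h
          · exact absurd h hdM
        rw [hxS S, if_pos hdS]
        -- ∑_S x₁ = ∑_{S ∩ M} x₁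
        have hs1 : ∑ i ∈ S, x₁ i = ∑ i ∈ S ∩ M, x₁ i := by
          symm
          apply Finset.sum_subset inter_subset_left
          intro i hiS hiSM
          apply hsupp₁
          intro hmem
          exact hiSM (Finset.mem_inter.mpr ⟨hiS, (Finset.mem_sdiff.mp hmem).1⟩)
        have hSMfin : z (S ∩ M) ≠ ⊤ := (subR hsub hS hMfin).2.1
        have hCSM : C ⊆ S ∩ M := Finset.subset_inter hCS hCM
        have hcon := hcon₁ (S ∩ M) hSMfin hCSM inter_subset_right
        have hsubm := (subR hsub hS hMfin).2.2
        rw [hSM'] at hsubm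
        rw [hs1]
        linarith

/-- For every finite-value set `U` there is a point of `EGP z` tight at `U`. -/
lemma exists_tight (hz0 : z ∅ = 0) (hzI : z Finset.univ ≠ ⊤) (hsub : Submodular z)
    {U : Finset I} (hU : z U ≠ ⊤) :
    ∃ x ∈ EGP z, ∑ i ∈ U, x i = zR z U := by
  have h0 : z ∅ ≠ ⊤ := by rw [hz0]; exact (by simp : (0 : WithTop ℝ) ≠ ⊤)
  obtain ⟨x₁, hsupp₁, htot₁, hcon₁⟩ :=
    greedy_aux hsub (U \ ∅).card ∅ U h0 hU (Finset.empty_subset U) le_rfl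
  obtain ⟨x₂, hsupp₂, htot₂, hcon₂⟩ :=
    greedy_aux hsub (Finset.univ \ U).card U Finset.univ hU hzI (Finset.subset_univ U) le_rfl
  rw [zR_empty hz0] at htot₁ hcon₁
  set x : I → ℝ := x₁ + x₂ with hx
  have hx1eval : ∀ S : Finset I, z S ≠ ⊤ → ∑ i ∈ S, x₁ i ≤ zR z (S ∩ U) := by
    intro S hS
    have heq : ∑ i ∈ S, x₁ i = ∑ i ∈ S ∩ U, x₁ i := by
      symm; apply Finset.sum_subset inter_subset_left
      intro i hiS hiSU
      apply hsupp₁; intro hmem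
      rw [Finset.sdiff_empty] at hmem
      exact hiSU (Finset.mem_inter.mpr ⟨hiS, hmem⟩)
    have hfin : z (S ∩ U) ≠ ⊤ := (subR hsub hS hU).2.1
    have := hcon₁ (S ∩ U) hfin (Finset.empty_subset _) inter_subset_right
    rw [heq]; linarith
  have hx2eval : ∀ S : Finset I, z S ≠ ⊤ →
      ∑ i ∈ S, x₂ i ≤ zR z (S ∪ U) - zR z U := by
    intro S hS
    have heq : ∑ i ∈ S, x₂ i = ∑ i ∈ S ∪ U, x₂ i := by
      apply Finset.sum_subset subset_union_left
      intro i hiSU hiS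
      apply hsupp₂; intro hmem
      have hiU : i ∉ U := (Finset.mem_sdiff.mp hmem).2
      rcases Finset.mem_union.mp hiSU with h | h
      · exact hiS h
      · exact hiU h
    have hfin : z (S ∪ U) ≠ ⊤ := (subR hsub hS hU).1
    have := hcon₂ (S ∪ U) hfin subset_union_right (Finset.subset_univ _)
    rw [heq]; linarith
  have hmem : x ∈ EGP z := by
    rw [mem_EGP_iff hzI]
    constructor
    · have : (∑ i, x i) = (∑ i, x₁ i) + ∑ i, x₂ i := by
        simp [hx, Finset.sum_add_distrib]
      rw [this, htot₁, htot₂]; ring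
    · intro S hS
      have h1 := hx1eval S hS
      have h2 := hx2eval S hS
      have hadd : ∑ i ∈ S, x i = (∑ i ∈ S, x₁ i) + ∑ i ∈ S, x₂ i := by
        simp [hx, Finset.sum_add_distrib]
      have hsubm := (subR hsub hS hU).2.2
      rw [hadd]; linarith
  refine ⟨x, hmem, ?_⟩
  have h1 : ∑ i ∈ U, x₁ i = ∑ i, x₁ i := by
    apply Finset.sum_subset (Finset.subset_univ U)
    intro i _ hiU
    apply hsupp₁; rw [Finset.sdiff_empty]; exact hiU
  have h2 : ∑ i ∈ U, x₂ i = 0 := by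
    apply Finset.sum_eq_zero
    intro i hiU
    apply hsupp₂
    intro hmem
    exact (Finset.mem_sdiff.mp hmem).2 hiU
  have hadd : ∑ i ∈ U, x i = (∑ i ∈ U, x₁ i) + ∑ i ∈ U, x₂ i := by
    simp [hx, Finset.sum_add_distrib]
  rw [hadd, h1, h2, htot₁]; ring

lemma EGP_nonempty (hz0 : z ∅ = 0) (hzI : z Finset.univ ≠ ⊤) (hsub : Submodular z) :
    ∃ x, x ∈ EGP z := by
  obtain ⟨x, hx, -⟩ := exists_tight hz0 hzI hsub hzI
  exact ⟨x, hx⟩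

/-- If `z U = ⊤` and `U` is nonempty, there is a "descent" pair escaping `U`. -/
lemma exists_escape (hz0 : z ∅ = 0) (hzI : z Finset.univ ≠ ⊤) (hsub : Submodular z)
    {U : Finset I} (hUne : U.Nonempty) (hUtop : z U = ⊤) :
    ∃ a b : I, b ∈ U ∧ a ∉ U ∧ ∀ S : Finset I, z S ≠ ⊤ → b ∈ S → a ∈ S := by
  by_contra hcon
  push_neg at hcon
  set σ : I → Finset I := fun b =>
    ((Finset.univ : Finset (Finset I)).filter (fun S => z S ≠ ⊤ ∧ b ∈ S)).inf id with hσ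
  have hmemσ : ∀ a b : I, a ∈ σ b ↔ ∀ S : Finset I, z S ≠ ⊤ → b ∈ S → a ∈ S := by
    intro a b
    rw [hσ]
    simp only [Finset.mem_inf, mem_filter, mem_univ, true_and, id]
    constructor
    · intro h S h1 h2; exact h S ⟨h1, h2⟩
    · intro h S hS; exact h S hS.1 hS.2
  have hσfin : ∀ b : I, z (σ b) ≠ ⊤ := by
    intro b
    rw [hσ]
    -- inf over a filter; prove by induction using inter-closure
    have : ∀ s : Finset (Finset I), (∀ S ∈ s, z S ≠ ⊤) → z (s.inf id) ≠ ⊤ := by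
      intro s
      induction s using Finset.induction_on with
      | empty => intro _; simp only [Finset.inf_empty, Finset.top_eq_univ]; exact hzI
      | @insert a s ha ih =>
        intro h
        rw [Finset.inf_insert]
        have h1 : z (id a) ≠ ⊤ := h a (mem_insert_self a s)
        have h2 : z (s.inf id) ≠ ⊤ := ih (fun b hb => h b (mem_insert_of_mem hb))
        exact (subR hsub h1 h2).2.1
    apply this
    intro S hS
    exact (mem_filter.mp hS).2.1
  have hUeq : U = U.sup σ := by
    apply subset_antisymm
    · intro b hb
      exact Finset.le_sup (f := σ) hb ((hmemσ b b).mpr (fun S _ h => h))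
    · intro a ha
      obtain ⟨b, hb, hab⟩ := Finset.mem_sup.mp ha
      by_contra haU
      obtain ⟨S, hS1, hS2, hS3⟩ := hcon a b hb haU
      exact hS3 ((hmemσ a b).mp hab S hS1 hS2)
  have : z U ≠ ⊤ := by
    rw [hUeq]
    exact sup_ne_top hz0 hsub (fun b _ => hσfin b)
  exact this hUtop

section Fam
variable (fam : Finset (Finset I))

/-- Partition sums: any set's sum splits along the blocks. -/
lemma sum_partition (hfam : IsIndecompFactorization z fam) (x : I → ℝ) (A : Finset I) :
    ∑ i ∈ A, x i = ∑ B ∈ fam, ∑ i ∈ A ∩ B, x i := by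
  obtain ⟨-, hdisj, hsup, -, -⟩ := hfam
  have hA : A = fam.biUnion (fun B => A ∩ B) := by
    ext i
    simp only [Finset.mem_biUnion, Finset.mem_inter]
    constructor
    · intro hi
      have : i ∈ fam.sup id := by rw [hsup]; exact Finset.mem_univ i
      obtain ⟨B, hB, hiB⟩ := Finset.mem_sup.mp this
      exact ⟨B, hB, hi, hiB⟩
    · rintro ⟨B, -, hi, -⟩; exact hi
  rw [hA, Finset.sum_biUnion]
  · rw [← hA]
  · intro B hB B' hB' hne
    exact (hdisj B (by exact_mod_cast hB) B' (by exact_mod_cast hB') hne).mono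
      inter_subset_right inter_subset_right

lemma blocks_fin (hzI : z Finset.univ ≠ ⊤) (hfam : IsIndecompFactorization z fam) :
    ∀ B ∈ fam, z B ≠ ⊤ := by
  intro B hB h'
  have h := hfam.2.2.2.1 Finset.univ
  apply hzI
  rw [h]
  exact WithTop.sum_eq_top.mpr ⟨B, hB, by rwa [Finset.univ_inter]⟩

lemma zR_univ_eq (hzI : z Finset.univ ≠ ⊤) (hfam : IsIndecompFactorization z fam) :
    zR z Finset.univ = ∑ B ∈ fam, zR z B := by
  have h := hfam.2.2.2.1 Finset.univ
  have hfin := blocks_fin fam hzI hfam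
  rw [coe_zR hzI] at h
  have : ∑ B ∈ fam, z (Finset.univ ∩ B) = ((∑ B ∈ fam, zR z B : ℝ) : WithTop ℝ) := by
    rw [WithTop.coe_sum]
    apply Finset.sum_congr rfl
    intro B hB
    rw [Finset.univ_inter, coe_zR (hfin B hB)]
  rw [this] at h
  exact_mod_cast h

/-- Every block is forced tight on all of `EGP z`. -/
lemma forced_blocks (hz0 : z ∅ = 0) (hzI : z Finset.univ ≠ ⊤) (hsub : Submodular z)
    (hfam : IsIndecompFactorization z fam) :
    ∀ B ∈ fam, ∀ x ∈ EGP z, ∑ i ∈ B, x i = zR z B := by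
  intro B hB x hx
  rw [mem_EGP_iff hzI] at hx
  obtain ⟨htot, hcon⟩ := hx
  have hfin := blocks_fin fam hzI hfam
  have hsumx : ∑ B' ∈ fam, ∑ i ∈ B', x i = ∑ B' ∈ fam, zR z B' := by
    have h1 : ∑ B' ∈ fam, ∑ i ∈ B', x i = ∑ i, x i := by
      rw [sum_partition fam hfam x Finset.univ]
      apply Finset.sum_congr rfl
      intro B' _; rw [Finset.univ_inter]
    rw [h1, htot, zR_univ_eq fam hzI hfam]
  have hle : ∀ B' ∈ fam, ∑ i ∈ B', x i ≤ zR z B' := fun B' hB' => hcon B' (hfin B' hB')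
  exact (Finset.sum_eq_sum_iff_of_le hle).mp hsumx B hB

/-- "Blocky" sets (unions of blocks) are forced tight. -/
lemma blocky_fin (hz0 : z ∅ = 0) (hzI : z Finset.univ ≠ ⊤)
    (hfam : IsIndecompFactorization z fam) {A : Finset I}
    (hblk : ∀ B ∈ fam, A ∩ B = ∅ ∨ A ∩ B = B) :
    z A ≠ ⊤ ∧ zR z A = ∑ B ∈ fam, zR z (A ∩ B) := by
  have hfin := blocks_fin fam hzI hfam
  have hterm : ∀ B ∈ fam, z (A ∩ B) ≠ ⊤ := by
    intro B hB
    rcases hblk B hB with h | h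
    · rw [h, hz0]; simp
    · rw [h]; exact hfin B hB
  have h := hfam.2.2.2.1 A
  have hco : ∑ B ∈ fam, z (A ∩ B) = ((∑ B ∈ fam, zR z (A ∩ B) : ℝ) : WithTop ℝ) := by
    rw [WithTop.coe_sum]
    exact Finset.sum_congr rfl (fun B hB => coe_zR (hterm B hB))
  rw [hco] at h
  have hAfin : z A ≠ ⊤ := by rw [h]; exact WithTop.coe_ne_top
  refine ⟨hAfin, ?_⟩
  rw [coe_zR hAfin] at h
  exact_mod_cast h

lemma blocky_forced (hz0 : z ∅ = 0) (hzI : z Finset.univ ≠ ⊤) (hsub : Submodular z)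
    (hfam : IsIndecompFactorization z fam) {A : Finset I}
    (hblk : ∀ B ∈ fam, A ∩ B = ∅ ∨ A ∩ B = B) :
    ∀ x ∈ EGP z, ∑ i ∈ A, x i = zR z A := by
  intro x hx
  rw [sum_partition fam hfam x A, (blocky_fin fam hz0 hzI hfam hblk).2]
  apply Finset.sum_congr rfl
  intro B hB
  rcases hblk B hB with h | h
  · rw [h]; simp [zR_empty hz0]
  · rw [h]; exact forced_blocks fam hz0 hzI hsub hfam B hB x hx

/-- Key lemma: a non-blocky finite set cannot be forced tight on all of `EGP z`. -/
lemma forced_not_blocky (hz0 : z ∅ = 0) (hzI : z Finset.univ ≠ ⊤) (hsub : Submodular z)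
    (hfam : IsIndecompFactorization z fam) {A : Finset I} (hA : z A ≠ ⊤)
    (hblk : ¬ ∀ B ∈ fam, A ∩ B = ∅ ∨ A ∩ B = B)
    (hforced : ∀ x ∈ EGP z, ∑ i ∈ A, x i = zR z A) : False := by
  push_neg at hblk
  obtain ⟨B, hB, hAB⟩ := hblk
  have hBfin : z B ≠ ⊤ := blocks_fin fam hzI hfam B hB
  set A' : Finset I := A ∩ B with hA'
  have hA'ne : A'.Nonempty := hAB.1
  have hA'B : A' ⊆ B := inter_subset_right
  have hA'lt : A' ≠ B := hAB.2
  have hA'fin : z A' ≠ ⊤ := (subR hsub hA hBfin).2.1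
  -- A' is forced tight
  have hforcedA' : ∀ x ∈ EGP z, ∑ i ∈ A', x i = zR z A' := by
    intro x hx
    have hxc := (mem_EGP_iff hzI).mp hx
    have h1 : ∑ i ∈ A ∪ B, x i ≤ zR z (A ∪ B) := hxc.2 _ (subR hsub hA hBfin).1
    have h2 : ∑ i ∈ A ∩ B, x i ≤ zR z (A ∩ B) := hxc.2 _ hA'fin
    have h3 : (∑ i ∈ A ∪ B, x i) + ∑ i ∈ A ∩ B, x i = (∑ i ∈ A, x i) + ∑ i ∈ B, x i :=
      Finset.sum_union_inter
    have h4 := (subR hsub hA hBfin).2.2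
    have h5 := hforced x hx
    have h6 := forced_blocks fam hz0 hzI hsub hfam B hB x hx
    rw [hA']
    linarith
  set U : Finset I := B \ A' with hU
  have hUne : U.Nonempty := by
    obtain ⟨b, hb, hb'⟩ := Finset.exists_of_ssubset (ssubset_of_subset_of_ne hA'B hA'lt)
    exact ⟨b, Finset.mem_sdiff.mpr ⟨hb, hb'⟩⟩
  have hforcedU : ∀ x ∈ EGP z, ∑ i ∈ U, x i = zR z B - zR z A' := by
    intro x hx
    have h1 : (∑ i ∈ B \ A', x i) + ∑ i ∈ A', x i = ∑ i ∈ B, x i := Finset.sum_sdiff hA'B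
    have h2 := hforcedA' x hx
    have h3 := forced_blocks fam hz0 hzI hsub hfam B hB x hx
    rw [hU]; linarith
  -- U has finite value
  have hUfin : z U ≠ ⊤ := by
    by_contra htop
    obtain ⟨a, b, hbU, haU, hab⟩ := exists_escape hz0 hzI hsub hUne htop
    obtain ⟨x₀, hx₀⟩ := EGP_nonempty hz0 hzI hsub
    have hba : b ≠ a := fun h => haU (h ▸ hbU)
    set x' : I → ℝ := fun i => x₀ i + (if i = b then 1 else 0) - (if i = a then 1 else 0)
      with hx'
    have hx'S : ∀ S : Finset I, ∑ i ∈ S, x' i =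
        (∑ i ∈ S, x₀ i) + (if b ∈ S then (1:ℝ) else 0) - (if a ∈ S then (1:ℝ) else 0) := by
      intro S
      simp only [hx', Finset.sum_add_distrib, Finset.sum_sub_distrib]
      rw [Finset.sum_ite_eq' S b (fun _ => (1:ℝ)), Finset.sum_ite_eq' S a (fun _ => (1:ℝ))]
    have hx'mem : x' ∈ EGP z := by
      rw [mem_EGP_iff hzI]
      have hx₀c := (mem_EGP_iff hzI).mp hx₀
      constructor
      · rw [hx'S Finset.univ]
        simp [hx₀c.1]
      · intro S hS
        rw [hx'S S]
        have := hx₀c.2 S hS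
        by_cases hbS : b ∈ S
        · have haS : a ∈ S := hab S hS hbS
          simp [hbS, haS]; linarith
        · by_cases haS : a ∈ S
          · simp [hbS, haS]; linarith
          · simp [hbS, haS]; linarith
    have e0 := hforcedU x₀ hx₀
    have e1 := hforcedU x' hx'mem
    rw [hx'S U, if_pos hbU, if_neg haU] at e1
    linarith
  -- value of U
  have hUval : zR z U = zR z B - zR z A' := by
    obtain ⟨x, hx, htight⟩ := exists_tight hz0 hzI hsub hUfin
    rw [← htight, hforcedU x hx]
  -- splitting of z on B along A' and U
  have hsplit : SplitsAlong z B A' U := by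
    refine ⟨Finset.disjoint_sdiff, Finset.union_sdiff_of_subset hA'B, ?_⟩
    intro E hE
    have hEU : E ∩ U = E \ A' := by
      ext i
      simp only [Finset.mem_inter, Finset.mem_sdiff, hU]
      constructor
      · rintro ⟨h1, h2, h3⟩; exact ⟨h1, h3⟩
      · rintro ⟨h1, h2⟩; exact ⟨h1, hE h1, h2⟩
    have hEA : (E ∩ A') ∪ (E ∩ U) = E := by
      rw [← Finset.inter_union_distrib_left, Finset.union_sdiff_of_subset hA'B]
      exact Finset.inter_eq_left.mpr hE
    have hEAi : (E ∩ A') ∩ (E ∩ U) = ∅ := by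
      rw [hEU]
      ext i
      simp only [Finset.mem_inter, Finset.mem_sdiff, Finset.notMem_empty, iff_false]
      rintro ⟨⟨-, h2⟩, -, h4⟩
      exact h4 h2
    by_cases hEfin : z E = ⊤
    · have h := hsub (E ∩ A') (E ∩ U)
      rw [hEA, hEAi, hz0, hEfin, add_zero] at h
      rw [hEfin]
      exact (top_le_iff.mp h).symm
    · have hEA'fin : z (E ∩ A') ≠ ⊤ := (subR hsub hEfin hA'fin).2.1
      have hEUu : z (E ∪ U) ≠ ⊤ := (subR hsub hEfin hUfin).1
      have hEUi : z (E ∩ U) ≠ ⊤ := (subR hsub hEfin hUfin).2.1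
      -- h1 : submodularity applied to A' and E ∪ U
      have e1 : A' ∪ (E ∪ U) = B := by
        apply subset_antisymm
        · apply Finset.union_subset hA'B (Finset.union_subset hE (Finset.sdiff_subset))
        · intro i hi
          by_cases h : i ∈ A'
          · exact Finset.mem_union_left _ h
          · exact Finset.mem_union_right _
              (Finset.mem_union_right _ (Finset.mem_sdiff.mpr ⟨hi, h⟩))
      have e2 : A' ∩ (E ∪ U) = E ∩ A' := by
        ext i
        simp only [Finset.mem_inter, Finset.mem_union, Finset.mem_sdiff, hU]
        constructor
        · rintro ⟨h1, h2 | ⟨-, h3⟩⟩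
          · exact ⟨h2, h1⟩
          · exact absurd h1 h3
        · rintro ⟨h1, h2⟩; exact ⟨h2, Or.inl h1⟩
      have h1 := (subR hsub hA'fin hEUu).2.2
      rw [e1, e2] at h1
      have h2 := (subR hsub hEfin hUfin).2.2
      have h3 := (subR hsub hEA'fin hEUi).2.2
      rw [hEA, hEAi] at h3
      rw [zR_empty hz0] at h3
      rw [hEU] at h2 h3 ⊢
      have hreal : zR z E = zR z (E ∩ A') + zR z (E \ A') := by linarith [hUval]
      rw [coe_zR hEfin, coe_zR hEA'fin, coe_zR (by rwa [hEU] at hEUi : z (E \ A') ≠ ⊤),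
        hreal]
      push_cast
      ring
  exact hfam.2.2.2.2 B hB A' U hA'ne hUne hsplit

/-- The interior point: slack at every non-blocky finite-value set. -/
lemma exists_interior (hz0 : z ∅ = 0) (hzI : z Finset.univ ≠ ⊤) (hsub : Submodular z)
    (hfam : IsIndecompFactorization z fam) :
    ∃ x ∈ EGP z, ∀ A : Finset I, z A ≠ ⊤ →
      (¬ ∀ B ∈ fam, A ∩ B = ∅ ∨ A ∩ B = B) → ∑ i ∈ A, x i < zR z A := by
  have key : ∀ A : Finset I, ∃ xA, xA ∈ EGP z ∧
      (z A ≠ ⊤ → (¬ ∀ B ∈ fam, A ∩ B = ∅ ∨ A ∩ B = B) → ∑ i ∈ A, xA i < zR z A) := by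
    intro A
    by_cases hc : z A ≠ ⊤ ∧ ¬ ∀ B ∈ fam, A ∩ B = ∅ ∨ A ∩ B = B
    · obtain ⟨hA, hblk⟩ := hc
      have : ¬ ∀ x ∈ EGP z, ∑ i ∈ A, x i = zR z A :=
        fun h => forced_not_blocky fam hz0 hzI hsub hfam hA hblk h
      push_neg at this
      obtain ⟨x, hx, hne⟩ := this
      refine ⟨x, hx, fun _ _ => ?_⟩
      have := ((mem_EGP_iff hzI).mp hx).2 A hA
      exact lt_of_le_of_ne this hne
    · obtain ⟨x₀, hx₀⟩ := EGP_nonempty hz0 hzI hsub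
      refine ⟨x₀, hx₀, fun h1 h2 => absurd ⟨h1, h2⟩ hc⟩
  choose xA hxmem hxstrict using key
  have hNpos : 0 < (Fintype.card (Finset I) : ℝ) := by
    have := Fintype.card_pos_iff.mpr (inferInstance : Nonempty (Finset I))
    exact_mod_cast this
  set N : ℝ := (Fintype.card (Finset I) : ℝ) with hN
  set x : I → ℝ := fun i => (∑ A : Finset I, xA A i) / N with hx
  have hxsum : ∀ S : Finset I, ∑ i ∈ S, x i = (∑ A : Finset I, ∑ i ∈ S, xA A i) / N := by
    intro S
    rw [hx]
    simp only
    rw [← Finset.sum_div]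
    congr 1
    exact Finset.sum_comm
  have hxmem' : x ∈ EGP z := by
    rw [mem_EGP_iff hzI]
    constructor
    · rw [hxsum Finset.univ]
      rw [div_eq_iff (ne_of_gt hNpos)]
      have : ∀ A : Finset I, ∑ i, xA A i = zR z Finset.univ :=
        fun A => ((mem_EGP_iff hzI).mp (hxmem A)).1
      rw [Finset.sum_congr rfl (fun A _ => this A), Finset.sum_const, Finset.card_univ]
      simp [hN, mul_comm]
    · intro S hS
      rw [hxsum S, div_le_iff₀ hNpos]
      have : ∀ A : Finset I, ∑ i ∈ S, xA A i ≤ zR z S :=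
        fun A => ((mem_EGP_iff hzI).mp (hxmem A)).2 S hS
      calc ∑ A : Finset I, ∑ i ∈ S, xA A i ≤ ∑ A : Finset I, zR z S :=
            Finset.sum_le_sum (fun A _ => this A)
        _ = zR z S * N := by rw [Finset.sum_const, Finset.card_univ]; simp [hN, mul_comm]
  refine ⟨x, hxmem', ?_⟩
  intro A hA hblk
  rw [hxsum A, div_lt_iff₀ hNpos]
  have hle : ∀ A' : Finset I, ∑ i ∈ A, xA A' i ≤ zR z A :=
    fun A' => ((mem_EGP_iff hzI).mp (hxmem A')).2 A hA
  have hstrict := hxstrict A hA hblk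
  calc ∑ A' : Finset I, ∑ i ∈ A, xA A' i
      < ∑ A' : Finset I, zR z A :=
        Finset.sum_lt_sum (fun A' _ => hle A') ⟨A, Finset.mem_univ A, hstrict⟩
    _ = zR z A * N := by rw [Finset.sum_const, Finset.card_univ]; simp [hN, mul_comm]

end Fam

/-- The dimension formula. -/
lemma finrank_direction (hz0 : z ∅ = 0) (hzI : z Finset.univ ≠ ⊤) (hsub : Submodular z)
    (fam : Finset (Finset I)) (hfam : IsIndecompFactorization z fam) :
    Module.finrank ℝ (affineSpan ℝ (EGP z)).direction = Fintype.card I - fam.card := by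
  set L : (I → ℝ) →ₗ[ℝ] ({B // B ∈ fam} → ℝ) :=
    { toFun := fun v B => ∑ i ∈ (B : Finset I), v i
      map_add' := by intro u v; funext B; exact Finset.sum_add_distrib
      map_smul' := by intro c v; funext B; simp [Finset.mul_sum] } with hL
  have hLapp : ∀ (v : I → ℝ) (B : {B // B ∈ fam}), L v B = ∑ i ∈ (B : Finset I), v i :=
    fun _ _ => rfl
  have hsurj : Function.Surjective L := by
    intro g
    have hpick : ∀ B : {B // B ∈ fam}, ∃ i, i ∈ (B : Finset I) := fun B => hfam.1 B B.2
    choose p hp using hpick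
    refine ⟨fun i => ∑ B : {B // B ∈ fam}, if i = p B then g B else 0, ?_⟩
    funext B'
    rw [hLapp, Finset.sum_comm]
    have hinner : ∀ B : {B // B ∈ fam},
        ∑ i ∈ (B' : Finset I), (if i = p B then g B else 0) =
          if p B ∈ (B' : Finset I) then g B else 0 :=
      fun B => Finset.sum_ite_eq' _ _ _
    rw [Finset.sum_congr rfl (fun B _ => hinner B)]
    rw [Finset.sum_eq_single B']
    · rw [if_pos (hp B')]
    · intro B _ hne
      rw [if_neg]
      intro hmem
      have hvne : (B : Finset I) ≠ (B' : Finset I) := fun h => hne (Subtype.ext h)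
      exact (Finset.disjoint_left.mp (hfam.2.1 _ B.2 _ B'.2 hvne)) (hp B) hmem
    · intro h; exact absurd (Finset.mem_univ B') h
  have hrank : Module.finrank ℝ (LinearMap.ker L) = Fintype.card I - fam.card := by
    have h1 := LinearMap.finrank_range_add_finrank_ker L
    rw [LinearMap.range_eq_top.mpr hsurj, finrank_top] at h1
    rw [Module.finrank_pi ℝ, Module.finrank_pi ℝ, Fintype.card_coe] at h1
    omega
  have hup : (affineSpan ℝ (EGP z)).direction ≤ LinearMap.ker L := by
    rw [direction_affineSpan, vectorSpan_def]
    apply Submodule.span_le.mpr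
    rintro v ⟨x, hx, y, hy, rfl⟩
    rw [SetLike.mem_coe, LinearMap.mem_ker]
    funext B
    rw [hLapp]
    show (∑ i ∈ (B : Finset I), (x - y) i) = (0 : ℝ)
    have : ∑ i ∈ (B : Finset I), (x - y) i =
        (∑ i ∈ (B : Finset I), x i) - ∑ i ∈ (B : Finset I), y i := by
      simp [Finset.sum_sub_distrib]
    rw [this, forced_blocks fam hz0 hzI hsub hfam B B.2 x hx,
      forced_blocks fam hz0 hzI hsub hfam B B.2 y hy, sub_self]
  obtain ⟨xs, hxs, hstrict⟩ := exists_interior fam hz0 hzI hsub hfam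
  have hlow : LinearMap.ker L ≤ (affineSpan ℝ (EGP z)).direction := by
    intro v hv
    have hvB : ∀ B ∈ fam, ∑ i ∈ B, v i = 0 := by
      intro B hB
      have h0 := LinearMap.mem_ker.mp hv
      have := congrFun h0 ⟨B, hB⟩
      rw [hLapp] at this
      exact this
    have hblocky0 : ∀ S : Finset I, (∀ B ∈ fam, S ∩ B = ∅ ∨ S ∩ B = B) →
        ∑ i ∈ S, v i = 0 := by
      intro S hS
      rw [sum_partition fam hfam v S]
      apply Finset.sum_eq_zero
      intro B hB
      rcases hS B hB with h | h
      · rw [h]; simp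
      · rw [h]; exact hvB B hB
    have huniv0 : ∑ i, v i = 0 := by
      apply hblocky0 Finset.univ
      intro B hB
      right; exact Finset.univ_inter B
    set 𝒩 : Finset (Finset I) := Finset.univ.filter
      (fun S => z S ≠ ⊤ ∧ ¬ ∀ B ∈ fam, S ∩ B = ∅ ∨ S ∩ B = B) with h𝒩
    set f : Finset I → ℝ := fun S => (zR z S - ∑ i ∈ S, xs i) / (|∑ i ∈ S, v i| + 1)
      with hf
    have hne : (insert (1:ℝ) (𝒩.image f)).Nonempty := ⟨1, Finset.mem_insert_self 1 _⟩
    set ε : ℝ := (insert (1:ℝ) (𝒩.image f)).min' hne with hε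
    have hstrict' : ∀ S ∈ 𝒩, ∑ i ∈ S, xs i < zR z S := by
      intro S hS
      rw [h𝒩, Finset.mem_filter] at hS
      exact hstrict S hS.2.1 hS.2.2
    have hεpos : 0 < ε := by
      have hmem := Finset.min'_mem _ hne
      rw [← hε] at hmem
      rcases Finset.mem_insert.mp hmem with h | h
      · rw [h]; norm_num
      · obtain ⟨S, hS, hfS⟩ := Finset.mem_image.mp h
        rw [← hfS, hf]
        apply div_pos
        · linarith [hstrict' S hS]
        · have := abs_nonneg (∑ i ∈ S, v i); linarith
    have hεle : ∀ S ∈ 𝒩, ε ≤ f S := fun S hS =>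
      Finset.min'_le _ _ (Finset.mem_insert_of_mem (Finset.mem_image_of_mem f hS))
    have hsplitS : ∀ S : Finset I, ∑ i ∈ S, (xs + ε • v) i =
        (∑ i ∈ S, xs i) + ε * ∑ i ∈ S, v i := by
      intro S
      simp [Finset.sum_add_distrib, Finset.mul_sum]
    have hmemv : xs + ε • v ∈ EGP z := by
      rw [mem_EGP_iff hzI]
      have hxsE := (mem_EGP_iff hzI).mp hxs
      constructor
      · rw [hsplitS Finset.univ, huniv0, mul_zero, add_zero]
        exact hxsE.1
      · intro S hS
        rw [hsplitS S]
        by_cases hb : ∀ B ∈ fam, S ∩ B = ∅ ∨ S ∩ B = B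
        · rw [hblocky0 S hb, mul_zero, add_zero]
          exact hxsE.2 S hS
        · have hSN : S ∈ 𝒩 := by
            rw [h𝒩, Finset.mem_filter]
            exact ⟨Finset.mem_univ S, hS, hb⟩
          have h1 := hεle S hSN
          have hden : (0:ℝ) < |∑ i ∈ S, v i| + 1 := by
            have := abs_nonneg (∑ i ∈ S, v i); linarith
          have h3 : ε * (|∑ i ∈ S, v i| + 1) ≤ zR z S - ∑ i ∈ S, xs i := by
            rw [hf] at h1
            calc ε * (|∑ i ∈ S, v i| + 1)
                ≤ ((zR z S - ∑ i ∈ S, xs i) / (|∑ i ∈ S, v i| + 1)) *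
                    (|∑ i ∈ S, v i| + 1) :=
                  mul_le_mul_of_nonneg_right h1 hden.le
              _ = zR z S - ∑ i ∈ S, xs i := div_mul_cancel₀ _ (ne_of_gt hden)
          have habs : ε * ∑ i ∈ S, v i ≤ ε * |∑ i ∈ S, v i| :=
            mul_le_mul_of_nonneg_left (le_abs_self _) hεpos.le
          nlinarith
    have hd : ε • v ∈ (affineSpan ℝ (EGP z)).direction := by
      have hv1 := mem_affineSpan ℝ hmemv
      have hv2 := mem_affineSpan ℝ hxs
      have := AffineSubspace.vsub_mem_direction hv1 hv2
      have heq : (xs + ε • v) -ᵥ xs = ε • v := by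
        simp [vsub_eq_sub]
      rwa [heq] at this
    have := Submodule.smul_mem _ ε⁻¹ hd
    rwa [smul_smul, inv_mul_cancel₀ (ne_of_gt hεpos), one_smul] at this
  rw [le_antisymm hup hlow]
  exact hrank

end EGPAux

/-- If `z = z₁ ⋯ z_r` is the factorization of the submodular function `z`
into indecomposables, then `dim Π(z) = |I| − r`. In particular, if `z` is indecomposable
then `dim Π(z) = |I| − 1` and there is `x ∈ Π(z)` with `x_A < z(A)` for every `A` with
`∅ ≠ A ≠ I` and `z(A) < ∞`. -/
theorem EGP_dimension
    {I : Type*} [Fintype I] [DecidableEq I]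
    (z : Finset I → WithTop ℝ) (hz0 : z ∅ = 0) (hzI : z Finset.univ ≠ ⊤)
    (hsub : Submodular z)
    (fam : Finset (Finset I)) (hfam : IsIndecompFactorization z fam) :
    Module.finrank ℝ (affineSpan ℝ (EGP z)).direction = Fintype.card I - fam.card ∧
    (IndecompOn z Finset.univ →
      Module.finrank ℝ (affineSpan ℝ (EGP z)).direction = Fintype.card I - 1 ∧
      ∃ x ∈ EGP z, ∀ A : Finset I, A.Nonempty → A ≠ Finset.univ → z A ≠ ⊤ →
        ((∑ i ∈ A, x i : ℝ) : WithTop ℝ) < z A) := by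
  classical
  have hdim := EGPAux.finrank_direction hz0 hzI hsub fam hfam
  refine ⟨hdim, fun hind => ?_⟩
  -- under indecomposability the factorization has at most one block
  have hcard1 : fam.card ≤ 1 := by
    by_contra hc
    push_neg at hc
    obtain ⟨B, hB, B', hB', hne⟩ := Finset.one_lt_card.mp hc
    have hBne : B.Nonempty := hfam.1 B hB
    have hB'ne : B'.Nonempty := hfam.1 B' hB'
    have hdisj : Disjoint B B' := hfam.2.1 B hB B' hB' hne
    have hcompl : (Finset.univ \ B).Nonempty := by
      obtain ⟨b', hb'⟩ := hB'ne
      exact ⟨b', Finset.mem_sdiff.mpr ⟨Finset.mem_univ b',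
        fun h => (Finset.disjoint_left.mp hdisj) h hb'⟩⟩
    apply hind B (Finset.univ \ B) hBne hcompl
    refine ⟨Finset.disjoint_sdiff, Finset.union_sdiff_of_subset (Finset.subset_univ B), ?_⟩
    intro E hE
    have hEB : E ∩ (Finset.univ \ B) = E \ B := by
      ext i
      simp only [Finset.mem_inter, Finset.mem_sdiff, Finset.mem_univ, true_and]
    rw [hEB]
    have h1 := hfam.2.2.2.1 E
    have h2 := hfam.2.2.2.1 (E \ B)
    have h3 : ∀ B'' ∈ fam.erase B, (E \ B) ∩ B'' = E ∩ B'' := by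
      intro B'' hB''
      have hB''mem := Finset.mem_of_mem_erase hB''
      have hB''ne : B'' ≠ B := Finset.ne_of_mem_erase hB''
      have hd : Disjoint B'' B := hfam.2.1 B'' hB''mem B hB hB''ne
      ext i
      simp only [Finset.mem_inter, Finset.mem_sdiff]
      constructor
      · rintro ⟨⟨h1', -⟩, h2'⟩; exact ⟨h1', h2'⟩
      · rintro ⟨h1', h2'⟩
        exact ⟨⟨h1', fun hiB => (Finset.disjoint_left.mp hd) h2' hiB⟩, h2'⟩
    have h4 : (E \ B) ∩ B = ∅ := by
      ext i
      simp only [Finset.mem_inter, Finset.mem_sdiff, Finset.notMem_empty, iff_false]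
      rintro ⟨⟨-, h⟩, h'⟩
      exact h h'
    rw [h1, h2, ← Finset.add_sum_erase fam _ hB, ← Finset.add_sum_erase fam _ hB, h4, hz0,
      zero_add]
    congr 1
    exact (Finset.sum_congr rfl (fun B'' hB'' => congrArg z (h3 B'' hB''))).symm
  -- dimension statement
  have hIcard : fam.card = 0 → Fintype.card I = 0 := by
    intro h0
    have hfe : fam = ∅ := Finset.card_eq_zero.mp h0
    have := hfam.2.2.1
    rw [hfe, Finset.sup_empty] at this
    have huniv : (Finset.univ : Finset I) = ∅ := by
      rw [← this]; rfl
    rw [← Finset.card_univ, huniv, Finset.card_empty]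
  constructor
  · rcases Nat.le_one_iff_eq_zero_or_eq_one.mp hcard1 with h0 | h1
    · have hI := hIcard h0; omega
    · omega
  · obtain ⟨xs, hxs, hstrict⟩ := EGPAux.exists_interior fam hz0 hzI hsub hfam
    refine ⟨xs, hxs, ?_⟩
    intro A hAne hAuniv hAfin
    have hnb : ¬ ∀ B ∈ fam, A ∩ B = ∅ ∨ A ∩ B = B := by
      intro hb
      rcases Nat.le_one_iff_eq_zero_or_eq_one.mp hcard1 with h0 | h1
      · obtain ⟨a, ha⟩ := hAne
        have h5 : (Finset.univ : Finset I).card = 0 := by rw [Finset.card_univ, hIcard h0]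
        have h6 : (Finset.univ : Finset I) = ∅ := Finset.card_eq_zero.mp h5
        have h7 : a ∈ (∅ : Finset I) := h6 ▸ Finset.mem_univ a
        exact absurd h7 (Finset.notMem_empty a)
      · obtain ⟨B₀, hB₀⟩ := Finset.card_eq_one.mp h1
        have hB₀univ : B₀ = Finset.univ := by
          have := hfam.2.2.1
          rw [hB₀, Finset.sup_singleton] at this
          exact this
        have := hb B₀ (by rw [hB₀]; exact Finset.mem_singleton_self B₀)
        rw [hB₀univ, Finset.inter_univ] at this
        rcases this with h | h
        · exact hAne.ne_empty h
        · exact hAuniv h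
    have := hstrict A hAfin hnb
    rw [EGPAux.coe_zR hAfin]
    exact_mod_cast this
end
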